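/- arXiv:2102.12995 — 10 statements merged into one kernel-verified Lean document; each statement's English description precedes it below -/
import Mathlib

section
/- Let K be a field with an absolute value, and let C, D, X be formal power series in K[[z]] with C·X = D. If the constant coefficient C_0 = 1, and there exist real constants c, d > 0 such that |C_n| < c and |D_n| < d for all n ≥ 0, then |X_n| ≤ d·(1+c)^n for all n ≥ 0. -/
theorem fast_growing_series_stmt0 {K : Type*} [Field K] (v : AbsoluteValue K ℝ)
    (C D X : PowerSeries K) (h : C * X = D)
    (hC0 : PowerSeries.coeff 0 C = 1)
    (c d : ℝ) (hc : 0 < c) (hd : 0 < d)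
    (hC : ∀ n : ℕ, v (PowerSeries.coeff n C) < c)
    (hD : ∀ n : ℕ, v (PowerSeries.coeff n D) < d) :
    ∀ n : ℕ, v (PowerSeries.coeff n X) ≤ d * (1 + c) ^ n := by
  intro n
  induction n using Nat.strong_induction_on with
  | _ n ih =>
  have key : (PowerSeries.coeff n) X =
      (PowerSeries.coeff n) D - ∑ k ∈ Finset.range n,
        (PowerSeries.coeff (k+1)) C * (PowerSeries.coeff (n-1-k)) X := by
    rw [← h, PowerSeries.coeff_mul, Finset.Nat.sum_antidiagonal_eq_sum_range_succ
      (fun i j => (PowerSeries.coeff i) C * (PowerSeries.coeff j) X),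
      Finset.sum_range_succ']
    simp only [hC0, Nat.sub_zero, one_mul]
    have : ∀ k ∈ Finset.range n,
        (PowerSeries.coeff (k+1)) C * (PowerSeries.coeff (n-(k+1))) X
        = (PowerSeries.coeff (k+1)) C * (PowerSeries.coeff (n-1-k)) X := by
      intro k hk
      have : n - (k+1) = n - 1 - k := by omega
      rw [this]
    rw [Finset.sum_congr rfl this]
    ring
  have hstep : v ((PowerSeries.coeff n) X) ≤ d + ∑ k ∈ Finset.range n,
      c * (d * (1 + c) ^ (n-1-k)) := by
    rw [key]
    refine le_trans (v.sub_le _ 0 _) ?_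
    simp only [sub_zero, zero_sub, v.map_neg]
    gcongr
    · exact (hD n).le
    refine le_trans (v.sum_le _ _) ?_
    apply Finset.sum_le_sum
    intro k hk
    rw [v.map_mul]
    have hk' : n - 1 - k < n := by
      simp only [Finset.mem_range] at hk; omega
    exact mul_le_mul (hC (k+1)).le (ih _ hk') (v.nonneg _) hc.le
  refine le_trans hstep ?_
  have : ∑ k ∈ Finset.range n, c * (d * (1 + c) ^ (n-1-k))
      = c * d * ∑ j ∈ Finset.range n, (1 + c) ^ j := by
    rw [Finset.mul_sum]
    rw [← Finset.sum_range_reflect (fun j => c * d * (1+c)^j) n]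
    apply Finset.sum_congr rfl
    intro k hk
    ring
  rw [this]
  have hgeom : (∑ j ∈ Finset.range n, (1 + c) ^ j) * ((1+c) - 1) = (1+c)^n - 1 :=
    geom_sum_mul _ _
  have : c * d * ∑ j ∈ Finset.range n, (1 + c) ^ j = d * ((1+c)^n - 1) := by
    rw [← hgeom]; ring
  rw [this]
  nlinarith [pow_pos (by linarith : (0:ℝ) < 1 + c) n]
end

section
/- Let K be a field with an absolute value, and let C, D, X ∈ K[[z]] with C·X = D. If C_0 = 1 and there exist c, d, r > 0 such that |C_n| < c·r^n and |D_n| < d·r^n for all n, then |X_n| ≤ d·(1+c)^n·r^n for all n. -/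
theorem fast_growing_series_stmt1 {K : Type*} [Field K] (v : AbsoluteValue K ℝ)
    (C D X : PowerSeries K) (h : C * X = D)
    (hC0 : PowerSeries.coeff 0 C = 1)
    (c d r : ℝ) (hc : 0 < c) (hd : 0 < d) (hr : 0 < r)
    (hC : ∀ n : ℕ, v (PowerSeries.coeff n C) < c * r ^ n)
    (hD : ∀ n : ℕ, v (PowerSeries.coeff n D) < d * r ^ n) :
    ∀ n : ℕ, v (PowerSeries.coeff n X) ≤ d * (1 + c) ^ n * r ^ n := by
  intro n
  induction n using Nat.strong_induction_on with
  | _ n ih =>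
    have hD' := congrArg (PowerSeries.coeff n) h
    rw [PowerSeries.coeff_mul,
      Finset.Nat.sum_antidiagonal_eq_sum_range_succ
        (fun i j => PowerSeries.coeff i C * PowerSeries.coeff j X),
      Finset.sum_range_succ'] at hD'
    simp only [Nat.sub_zero, hC0, one_mul] at hD'
    have key : PowerSeries.coeff n X = PowerSeries.coeff n D -
        ∑ i ∈ Finset.range n,
          PowerSeries.coeff (i+1) C * PowerSeries.coeff (n-(i+1)) X := by
      rw [← hD']; ring
    have hb : v (PowerSeries.coeff n X) ≤ d * r ^ n +
        ∑ i ∈ Finset.range n,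
          (c * r ^ (i+1)) * (d * (1+c)^(n-(i+1)) * r ^ (n-(i+1))) := by
      rw [key]
      refine le_trans (v.sub_le_add _ _) (add_le_add (hD n).le ?_)
      refine le_trans (v.sum_le _ _) (Finset.sum_le_sum fun i hi => ?_)
      rw [v.map_mul]
      have h1 : i + 1 ≤ n := Finset.mem_range.mp hi
      exact mul_le_mul (hC (i+1)).le (ih (n-(i+1)) (by omega)) (v.nonneg _)
        (by positivity)
    refine hb.trans (le_of_eq ?_)
    have hsum : ∀ i ∈ Finset.range n,
        (c * r ^ (i+1)) * (d * (1+c)^(n-(i+1)) * r ^ (n-(i+1)))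
          = (c * d * r ^ n) * (1+c)^(n-1-i) := by
      intro i hi
      have h1 : i + 1 ≤ n := Finset.mem_range.mp hi
      have h2 : n - (i+1) = n - 1 - i := by omega
      have h3 : r ^ (i+1) * r ^ (n-1-i) = r ^ n := by
        rw [← pow_add]; congr 1; omega
      rw [h2]
      linear_combination c * d * (1+c)^(n-1-i) * h3
    rw [Finset.sum_congr rfl hsum, ← Finset.mul_sum,
      Finset.sum_range_reflect (fun j => (1+c)^j) n]
    have hgeom : (∑ i ∈ Finset.range n, (1+c)^i) * ((1+c) - 1) = (1+c)^n - 1 :=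
      geom_sum_mul _ _
    linear_combination d * r ^ n * hgeom
end

section
/- Let K be a field with an absolute value. Say a power series C ∈ K[[z]] exhibits exponential growth if there exists r > 0 with |C_n| = O(r^n) as n → ∞. If X ∈ K[[z]] does not exhibit exponential growth (i.e., exhibits superexponential growth), then X is not the quotient of two series exhibiting exponential growth: there do not exist C, D ∈ K[[z]], with C ≠ 0, both exhibiting exponential growth, such that C·X = D. -/
/-- A power series exhibits exponential growth (w.r.t. an absolute value `v`) if its
coefficients are `O(r^n)` for some `r > 0`. -/
def ExponentialGrowth {K : Type*} [Field K] (v : AbsoluteValue K ℝ)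
    (C : PowerSeries K) : Prop :=
  ∃ M r : ℝ, 0 < M ∧ 0 < r ∧ ∀ n : ℕ, v (PowerSeries.coeff n C) ≤ M * r ^ n

theorem fast_growing_series_stmt2 {K : Type*} [Field K] (v : AbsoluteValue K ℝ)
    (X : PowerSeries K) (hX : ¬ ExponentialGrowth v X) :
    ¬ ∃ C D : PowerSeries K, C ≠ 0 ∧ ExponentialGrowth v C ∧ ExponentialGrowth v D ∧
      C * X = D := by
  classical
  rintro ⟨C, D, hC0, ⟨M1, r1, hM1, hr1, hCb⟩, ⟨M2, r2, hM2, hr2, hDb⟩, hCX⟩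
  apply hX
  -- common bound
  set M : ℝ := max M1 M2 with hMdef
  set r : ℝ := max r1 r2 with hrdef
  have hM : 0 < M := lt_max_of_lt_left hM1
  have hr : 0 < r := lt_max_of_lt_left hr1
  have hCb' : ∀ n : ℕ, v (PowerSeries.coeff n C) ≤ M * r ^ n := by
    intro n
    refine (hCb n).trans (mul_le_mul (le_max_left _ _)
      (pow_le_pow_left₀ hr1.le (le_max_left _ _) n) (pow_nonneg hr1.le n) hM.le)
  have hDb' : ∀ n : ℕ, v (PowerSeries.coeff n D) ≤ M * r ^ n := by
    intro n
    refine (hDb n).trans (mul_le_mul (le_max_right _ _)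
      (pow_le_pow_left₀ hr2.le (le_max_right _ _) n) (pow_nonneg hr2.le n) hM.le)
  -- minimal nonzero coefficient of C
  have hne : ∃ n : ℕ, PowerSeries.coeff n C ≠ 0 := by
    by_contra h
    push_neg at h
    exact hC0 (PowerSeries.ext fun n => by simpa using h n)
  obtain ⟨m, hc, hlow⟩ : ∃ m : ℕ, PowerSeries.coeff m C ≠ 0 ∧
      ∀ k < m, PowerSeries.coeff k C = 0 :=
    ⟨Nat.find hne, Nat.find_spec hne, fun k hk => by
      by_contra h
      have := Nat.find_le (h := hne) h
      omega⟩
  set c : K := PowerSeries.coeff m C with hcdef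
  set a : ℝ := v c with hadef
  have ha : 0 < a := v.pos hc
  set B : ℝ := M * r ^ m / a with hBdef
  have hB : 0 < B := div_pos (mul_pos hM (pow_pos hr m)) ha
  have haB : a * B = M * r ^ m := by
    rw [hBdef]; field_simp
  set T : ℝ := r * (1 + B) with hTdef
  have hT : 0 < T := mul_pos hr (by linarith)
  -- the key coefficient identity
  have key : ∀ n : ℕ, c * PowerSeries.coeff n X =
      PowerSeries.coeff (n + m) D -
        ∑ k ∈ Finset.Ico (m + 1) (n + m + 1),
          PowerSeries.coeff k C * PowerSeries.coeff (n + m - k) X := by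
    intro n
    have h1 : PowerSeries.coeff (n + m) D =
        ∑ k ∈ Finset.range (n + m + 1),
          PowerSeries.coeff k C * PowerSeries.coeff (n + m - k) X := by
      rw [← hCX, PowerSeries.coeff_mul, Finset.Nat.sum_antidiagonal_eq_sum_range_succ_mk]
    have h2 : ∑ k ∈ Finset.range (n + m + 1),
          PowerSeries.coeff k C * PowerSeries.coeff (n + m - k) X =
        ∑ k ∈ Finset.Ico m (n + m + 1),
          PowerSeries.coeff k C * PowerSeries.coeff (n + m - k) X := by
      rw [Finset.range_eq_Ico, ← Finset.sum_Ico_consecutive _ (Nat.zero_le m) (by omega)]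
      rw [Finset.sum_eq_zero (fun k hk => by
        rw [hlow k (by simpa using (Finset.mem_Ico.mp hk).2), zero_mul]), zero_add]
    have h3 : ∑ k ∈ Finset.Ico m (n + m + 1),
          PowerSeries.coeff k C * PowerSeries.coeff (n + m - k) X =
        c * PowerSeries.coeff n X +
        ∑ k ∈ Finset.Ico (m + 1) (n + m + 1),
          PowerSeries.coeff k C * PowerSeries.coeff (n + m - k) X := by
      rw [Finset.sum_eq_sum_Ico_succ_bot (by omega : m < n + m + 1),
        show n + m - m = n by omega]
    rw [h1, h2, h3]; ring
  -- geometric sum identity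
  have geo : ∀ n : ℕ, B * ∑ j ∈ Finset.range n, (1 + B) ^ j = (1 + B) ^ n - 1 := by
    intro n
    induction n with
    | zero => simp
    | succ n ih =>
      rw [Finset.sum_range_succ, mul_add, ih, pow_succ]
      ring
  -- main bound by strong induction
  have main : ∀ n : ℕ, v (PowerSeries.coeff n X) ≤ B * T ^ n := by
    intro n
    induction n using Nat.strong_induction_on with
    | _ n ih =>
      have hstep : a * v (PowerSeries.coeff n X) ≤
          M * r ^ (n + m) + M * B * r ^ (n + m) *
            ∑ j ∈ Finset.range n, (1 + B) ^ j := by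
        have hv : a * v (PowerSeries.coeff n X) = v (c * PowerSeries.coeff n X) := by
          rw [v.map_mul]
        rw [hv, key n]
        have tri : v (PowerSeries.coeff (n + m) D -
            ∑ k ∈ Finset.Ico (m + 1) (n + m + 1),
              PowerSeries.coeff k C * PowerSeries.coeff (n + m - k) X) ≤
            v (PowerSeries.coeff (n + m) D) +
            v (∑ k ∈ Finset.Ico (m + 1) (n + m + 1),
              PowerSeries.coeff k C * PowerSeries.coeff (n + m - k) X) := by
          exact (v.sub_le _ 0 _).trans (by simp)
        refine tri.trans ?_
        have hsum : v (∑ k ∈ Finset.Ico (m + 1) (n + m + 1),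
              PowerSeries.coeff k C * PowerSeries.coeff (n + m - k) X) ≤
            ∑ k ∈ Finset.Ico (m + 1) (n + m + 1),
              M * B * r ^ (n + m) * (1 + B) ^ (n + m - k) := by
          refine (v.sum_le _ _).trans (Finset.sum_le_sum fun k hk => ?_)
          rw [Finset.mem_Ico] at hk
          have hklt : n + m - k < n := by omega
          rw [v.map_mul]
          have h1 : v (PowerSeries.coeff k C) ≤ M * r ^ k := hCb' k
          have h2 : v (PowerSeries.coeff (n + m - k) X) ≤ B * T ^ (n + m - k) :=
            ih _ hklt
          calc v (PowerSeries.coeff k C) * v (PowerSeries.coeff (n + m - k) X)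
              ≤ (M * r ^ k) * (B * T ^ (n + m - k)) := by
                exact mul_le_mul h1 h2 (v.nonneg _) (by positivity)
            _ = M * B * r ^ (n + m) * (1 + B) ^ (n + m - k) := by
                have hpow : r ^ k * r ^ (n + m - k) = r ^ (n + m) := by
                  rw [← pow_add]; congr 1; omega
                rw [hTdef, mul_pow, ← hpow]; ring
        have hreindex : ∑ k ∈ Finset.Ico (m + 1) (n + m + 1),
            M * B * r ^ (n + m) * (1 + B) ^ (n + m - k) =
            M * B * r ^ (n + m) * ∑ j ∈ Finset.range n, (1 + B) ^ j := by
          rw [Finset.sum_Ico_eq_sum_range]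
          rw [show n + m + 1 - (m + 1) = n by omega]
          rw [← Finset.mul_sum]
          congr 1
          rw [← Finset.sum_range_reflect]
          refine Finset.sum_congr rfl fun j hj => ?_
          rw [Finset.mem_range] at hj
          congr 1
          omega
        rw [hreindex] at hsum
        exact add_le_add (hDb' (n + m)) hsum
      have hfin : a * v (PowerSeries.coeff n X) ≤ a * (B * T ^ n) := by
        refine hstep.trans (le_of_eq ?_)
        have : M * B * r ^ (n + m) * ∑ j ∈ Finset.range n, (1 + B) ^ j =
            M * r ^ (n + m) * ((1 + B) ^ n - 1) := by
          rw [← geo n]; ring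
        rw [this]
        have : M * r ^ (n + m) + M * r ^ (n + m) * ((1 + B) ^ n - 1) =
            (M * r ^ m) * (r ^ n * (1 + B) ^ n) := by
          rw [pow_add]; ring
        rw [this, ← haB, hTdef, mul_pow]
        ring
      exact le_of_mul_le_mul_left hfin ha
  exact ⟨B, T, hB, hT, main⟩
end

section
/- The formal power series X = Σ_{n≥0} n!·z^n in ℂ[[z]] is irrational over the ring R of power series exhibiting exponential growth: there do not exist C, D ∈ R with C ≠ 0 and C·X = D. -/
open Finset

/-- Key combinatorial inequality: for `1 ≤ i ≤ m`, `m * ((i-1)! * (m-i)!) ≤ m!`. -/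
lemma key_nat_ineq {i m : ℕ} (h1 : 1 ≤ i) (h2 : i ≤ m) :
    m * ((i - 1).factorial * (m - i).factorial) ≤ m.factorial := by
  have hfac : m.choose i * (i.factorial * (m - i).factorial) = m.factorial := by
    rw [← Nat.choose_mul_factorial_mul_factorial h2]; ring
  have hi : i.factorial = i * (i - 1).factorial := by
    obtain ⟨j, rfl⟩ := Nat.exists_eq_add_of_le h1
    simp [Nat.factorial_succ, Nat.add_comm]
  have hsucc : m * (m - 1).choose (i - 1) = m.choose i * i := by
    have h := Nat.add_one_mul_choose_eq (m - 1) (i - 1)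
    have e1 : m - 1 + 1 = m := by omega
    have e2 : i - 1 + 1 = i := by omega
    rw [e1, e2] at h
    omega
  have hpos : 1 ≤ (m - 1).choose (i - 1) := Nat.choose_pos (by omega)
  calc m * ((i - 1).factorial * (m - i).factorial)
      ≤ (m * (m - 1).choose (i - 1)) * ((i - 1).factorial * (m - i).factorial) :=
        Nat.mul_le_mul_right _ (Nat.le_mul_of_pos_right m hpos)
    _ = m.choose i * (i.factorial * (m - i).factorial) := by rw [hsucc, hi]; ring
    _ = m.factorial := hfac

/-- A power series over `ℂ` exhibits exponential growth if its coefficients are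
`O(r^n)` for some `r > 0`. -/
def ExponentialGrowthC (C : PowerSeries ℂ) : Prop :=
  ∃ M r : ℝ, 0 < M ∧ 0 < r ∧ ∀ n : ℕ, ‖PowerSeries.coeff n C‖ ≤ M * r ^ n

theorem fast_growing_series_stmt4 :
    ¬ ∃ C D : PowerSeries ℂ, C ≠ 0 ∧ ExponentialGrowthC C ∧ ExponentialGrowthC D ∧
      C * (PowerSeries.mk fun n => (n.factorial : ℂ)) = D := by
  rintro ⟨C, D, hC0, ⟨M1, r1, hM1, hr1, hCb⟩, ⟨M2, r2, hM2, hr2, hDb⟩, hEq⟩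
  -- common bounds
  set M : ℝ := max M1 M2 with hM
  set r : ℝ := max (max r1 r2) 1 with hr
  have hMpos : 0 < M := lt_of_lt_of_le hM1 (le_max_left _ _)
  have hr1' : 1 ≤ r := le_max_right _ _
  have hrpos : 0 < r := lt_of_lt_of_le one_pos hr1'
  have hCb' : ∀ n : ℕ, ‖PowerSeries.coeff n C‖ ≤ M * r ^ n := fun n =>
    (hCb n).trans (mul_le_mul (le_max_left _ _)
      (pow_le_pow_left₀ hr1.le ((le_max_left r1 r2).trans (le_max_left _ _)) n)
      (pow_nonneg hr1.le n) hMpos.le)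
  have hDb' : ∀ n : ℕ, ‖PowerSeries.coeff n D‖ ≤ M * r ^ n := fun n =>
    (hDb n).trans (mul_le_mul (le_max_right _ _)
      (pow_le_pow_left₀ hr2.le ((le_max_right r1 r2).trans (le_max_left _ _)) n)
      (pow_nonneg hr2.le n) hMpos.le)
  -- least nonzero coefficient of C
  have hex : ∃ n, PowerSeries.coeff n C ≠ 0 := by
    by_contra h
    push_neg at h
    exact hC0 (PowerSeries.ext fun n => by simp [h n])
  classical
  set k := Nat.find hex with hk
  have hck : PowerSeries.coeff k C ≠ 0 := Nat.find_spec hex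
  have hlt : ∀ j, j < k → PowerSeries.coeff j C = 0 := fun j hj => by
    have := Nat.find_min hex hj
    simpa using this
  -- the convolution identity
  have hconv : ∀ n : ℕ, (∑ j ∈ range (n + 1),
      PowerSeries.coeff j C * ((n - j).factorial : ℂ)) = PowerSeries.coeff n D := by
    intro n
    have := congrArg (PowerSeries.coeff n) hEq
    rw [PowerSeries.coeff_mul, Finset.Nat.sum_antidiagonal_eq_sum_range_succ_mk] at this
    simpa [PowerSeries.coeff_mk] using this
  -- main estimate: for every m ≥ 1, ‖c k‖ * m ≤ 2 * M * r^(k+1) * exp r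
  have hmain : ∀ m : ℕ, 1 ≤ m →
      ‖PowerSeries.coeff k C‖ * m ≤ 2 * M * r ^ (k + 1) * Real.exp r := by
    intro m hm
    set n := k + m with hn
    have hkn : k < n + 1 := by omega
    -- split the sum
    have hsplit : (∑ j ∈ range (n + 1), PowerSeries.coeff j C * ((n - j).factorial : ℂ))
        = PowerSeries.coeff k C * (m.factorial : ℂ)
          + ∑ j ∈ Ico (k + 1) (n + 1), PowerSeries.coeff j C * ((n - j).factorial : ℂ) := by
      rw [range_eq_Ico, ← Finset.sum_Ico_consecutive _ (Nat.zero_le k) (by omega : k ≤ n + 1)]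
      have h0 : (∑ j ∈ Ico 0 k, PowerSeries.coeff j C * ((n - j).factorial : ℂ)) = 0 :=
        Finset.sum_eq_zero fun j hj => by
          rw [hlt j (mem_Ico.mp hj).2]; ring
      rw [h0, zero_add, Finset.sum_eq_sum_Ico_succ_bot hkn]
      congr 2
      simp [hn]
    have heq2 : PowerSeries.coeff k C * (m.factorial : ℂ)
        = PowerSeries.coeff n D
          - ∑ j ∈ Ico (k + 1) (n + 1), PowerSeries.coeff j C * ((n - j).factorial : ℂ) := by
      rw [← hconv n, hsplit]; ring
    -- norm bound
    have hnorm : ‖PowerSeries.coeff k C‖ * (m.factorial : ℝ)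
        ≤ M * r ^ n + ∑ j ∈ Ico (k + 1) (n + 1), M * r ^ j * ((n - j).factorial : ℝ) := by
      calc ‖PowerSeries.coeff k C‖ * (m.factorial : ℝ)
          = ‖PowerSeries.coeff k C * (m.factorial : ℂ)‖ := by
            rw [norm_mul]; simp
        _ ≤ ‖PowerSeries.coeff n D‖
            + ‖∑ j ∈ Ico (k + 1) (n + 1), PowerSeries.coeff j C * ((n - j).factorial : ℂ)‖ := by
            rw [heq2]; exact norm_sub_le _ _
        _ ≤ M * r ^ n + ∑ j ∈ Ico (k + 1) (n + 1), M * r ^ j * ((n - j).factorial : ℝ) := by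
            gcongr
            · exact hDb' n
            refine (norm_sum_le _ _).trans (Finset.sum_le_sum fun j hj => ?_)
            rw [norm_mul]
            have : ‖((n - j).factorial : ℂ)‖ = ((n - j).factorial : ℝ) := by
              simp
            rw [this]
            exact mul_le_mul_of_nonneg_right (hCb' j) (Nat.cast_nonneg _)
    -- bound each tail term
    have htail : ∀ j ∈ Ico (k + 1) (n + 1),
        M * r ^ j * ((n - j).factorial : ℝ)
          ≤ M * r ^ (k + 1) * (r ^ (j - k - 1) / ((j - k - 1).factorial : ℝ))
            * ((m.factorial : ℝ) / m) := by
      intro j hj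
      obtain ⟨hj1, hj2⟩ := mem_Ico.mp hj
      set i := j - k with hi
      have hi1 : 1 ≤ i := by omega
      have him : i ≤ m := by omega
      have hkey := key_nat_ineq hi1 him
      have hnj : n - j = m - i := by omega
      have hmpos : (0 : ℝ) < m := by exact_mod_cast hm
      rw [hnj]
      have hrj : r ^ j = r ^ (k + 1) * r ^ (i - 1) := by
        rw [← pow_add]; congr 1; omega
      rw [hrj]
      have hkeyR : ((m - i).factorial : ℝ)
          ≤ (m.factorial : ℝ) / (m * ((i - 1).factorial : ℝ)) := by
        rw [le_div_iff₀ (by positivity)]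
        have : ((m : ℝ) * ((i - 1).factorial * (m - i).factorial) : ℝ) ≤ (m.factorial : ℝ) := by
          exact_mod_cast hkey
        nlinarith [this]
      calc M * (r ^ (k + 1) * r ^ (i - 1)) * ((m - i).factorial : ℝ)
          ≤ M * (r ^ (k + 1) * r ^ (i - 1))
            * ((m.factorial : ℝ) / (m * ((i - 1).factorial : ℝ))) := by
            gcongr
        _ = M * r ^ (k + 1) * (r ^ (i - 1) / ((i - 1).factorial : ℝ))
            * ((m.factorial : ℝ) / m) := by
            field_simp
    -- sum the tail bound
    have hmpos : (0 : ℝ) < m := by exact_mod_cast hm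
    have hsum2 : (∑ j ∈ Ico (k + 1) (n + 1), M * r ^ j * ((n - j).factorial : ℝ))
        ≤ M * r ^ (k + 1) * Real.exp r * ((m.factorial : ℝ) / m) := by
      calc (∑ j ∈ Ico (k + 1) (n + 1), M * r ^ j * ((n - j).factorial : ℝ))
          ≤ ∑ j ∈ Ico (k + 1) (n + 1), M * r ^ (k + 1)
              * (r ^ (j - k - 1) / ((j - k - 1).factorial : ℝ)) * ((m.factorial : ℝ) / m) :=
            Finset.sum_le_sum htail
        _ = M * r ^ (k + 1) * ((m.factorial : ℝ) / m)
              * ∑ j ∈ Ico (k + 1) (n + 1), (r ^ (j - k - 1) / ((j - k - 1).factorial : ℝ)) := by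
            rw [Finset.mul_sum]; apply Finset.sum_congr rfl; intro j _; ring
        _ ≤ M * r ^ (k + 1) * ((m.factorial : ℝ) / m) * Real.exp r := by
            have : (∑ j ∈ Ico (k + 1) (n + 1), (r ^ (j - k - 1) / ((j - k - 1).factorial : ℝ)))
                = ∑ i ∈ range m, (r ^ i / (i.factorial : ℝ)) := by
              rw [Finset.sum_Ico_eq_sum_range]
              have : n + 1 - (k + 1) = m := by omega
              rw [this]
              apply Finset.sum_congr rfl
              intro i _
              have h1 : k + 1 + i - k - 1 = i := by omega
              rw [h1]
            rw [this]
            exact mul_le_mul_of_nonneg_left (Real.sum_le_exp_of_nonneg hrpos.le m)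
              (by positivity)
        _ = M * r ^ (k + 1) * Real.exp r * ((m.factorial : ℝ) / m) := by ring
    -- bound M * r ^ n
    have hrn : M * r ^ n ≤ M * r ^ (k + 1) * Real.exp r * ((m.factorial : ℝ) / m) := by
      have h1 : r ^ n = r ^ (k + 1) * r ^ (m - 1) := by
        rw [← pow_add]; congr 1; omega
      have h2 : r ^ (m - 1) / ((m - 1).factorial : ℝ) ≤ Real.exp r :=
        Real.pow_div_factorial_le_exp r hrpos.le (m - 1)
      have h3 : (m.factorial : ℝ) / m = ((m - 1).factorial : ℝ) := by
        rw [eq_comm, eq_div_iff (ne_of_gt hmpos)]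
        have : m.factorial = m * (m - 1).factorial := by
          obtain ⟨j, rfl⟩ := Nat.exists_eq_add_of_le hm
          simp [Nat.factorial_succ, Nat.add_comm]
        rw [this]; push_cast; ring
      rw [h1, h3]
      have h4 : r ^ (m - 1) ≤ Real.exp r * ((m - 1).factorial : ℝ) := by
        rw [div_le_iff₀ (by positivity)] at h2
        linarith
      calc M * (r ^ (k + 1) * r ^ (m - 1))
          ≤ M * (r ^ (k + 1) * (Real.exp r * ((m - 1).factorial : ℝ))) := by gcongr
        _ = M * r ^ (k + 1) * Real.exp r * ((m - 1).factorial : ℝ) := by ring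
    -- combine
    have hfinal : ‖PowerSeries.coeff k C‖ * (m.factorial : ℝ)
        ≤ 2 * M * r ^ (k + 1) * Real.exp r * ((m.factorial : ℝ) / m) := by
      calc ‖PowerSeries.coeff k C‖ * (m.factorial : ℝ)
          ≤ M * r ^ n + ∑ j ∈ Ico (k + 1) (n + 1), M * r ^ j * ((n - j).factorial : ℝ) := hnorm
        _ ≤ M * r ^ (k + 1) * Real.exp r * ((m.factorial : ℝ) / m)
            + M * r ^ (k + 1) * Real.exp r * ((m.factorial : ℝ) / m) := add_le_add hrn hsum2
        _ = 2 * M * r ^ (k + 1) * Real.exp r * ((m.factorial : ℝ) / m) := by ring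
    have hfacpos : (0 : ℝ) < (m.factorial : ℝ) := by
      exact_mod_cast Nat.factorial_pos m
    have h5 := mul_le_mul_of_nonneg_right hfinal
      (div_nonneg hmpos.le hfacpos.le : (0:ℝ) ≤ (m : ℝ) / (m.factorial : ℝ))
    have e1 : ‖PowerSeries.coeff k C‖ * (m.factorial : ℝ) * ((m : ℝ) / (m.factorial : ℝ))
        = ‖PowerSeries.coeff k C‖ * m := by
      field_simp
    have e2 : 2 * M * r ^ (k + 1) * Real.exp r * ((m.factorial : ℝ) / m)
        * ((m : ℝ) / (m.factorial : ℝ)) = 2 * M * r ^ (k + 1) * Real.exp r := by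
      field_simp
    rw [e1, e2] at h5
    exact h5
  -- derive contradiction
  have hckpos : 0 < ‖PowerSeries.coeff k C‖ := norm_pos_iff.mpr hck
  obtain ⟨m, hmgt⟩ := exists_nat_gt
    (max 1 ((2 * M * r ^ (k + 1) * Real.exp r) / ‖PowerSeries.coeff k C‖))
  have hm1 : 1 ≤ m := by
    have : (1 : ℝ) < m := lt_of_le_of_lt (le_max_left _ _) hmgt
    exact_mod_cast this.le
  have hmain' := hmain m hm1
  have hmgt2 : (2 * M * r ^ (k + 1) * Real.exp r) / ‖PowerSeries.coeff k C‖ < m :=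
    lt_of_le_of_lt (le_max_right _ _) hmgt
  rw [div_lt_iff₀ hckpos] at hmgt2
  nlinarith [hmain', hmgt2]
end

section
/- Fix a power series X ∈ K[[z]] over a field K and a natural number m ≥ 1. For each n, define (X^{[m]})_n := Σ over tuples (k_1,…,k_m) of nonnegative integers with k_1+…+k_m = n and each k_i ≤ n/2, of X_{k_1}···X_{k_m}; and define (X^{⟨m⟩})_n := Σ_{ℓ < n/2} (X^{m-1})_ℓ · X_{n-ℓ}. Then for every n, (X^m)_n = (X^{[m]})_n + m·(X^{⟨m⟩})_n. -/
lemma auxA {K : Type*} [CommSemiring K] (φ : PowerSeries K) (m n : ℕ) :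
    PowerSeries.coeff (R := K) n (φ ^ m) =
      ∑ f ∈ Finset.Nat.antidiagonalTuple m n, ∏ i, PowerSeries.coeff (R := K) (f i) φ := by
  induction m generalizing n with
  | zero =>
    cases n with
    | zero => simp
    | succ n => simp [PowerSeries.coeff_one]
  | succ m ih =>
    rw [pow_succ', PowerSeries.coeff_mul]
    simp_rw [ih, Finset.mul_sum]
    rw [Finset.sum_sigma']
    refine Finset.sum_nbij' (fun (x : (_ : ℕ × ℕ) × (Fin m → ℕ)) => Fin.cons x.1.1 x.2)
      (fun (f : Fin (m+1) → ℕ) => ⟨(f 0, ∑ i : Fin m, f i.succ), Fin.tail f⟩) ?_ ?_ ?_ ?_ ?_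
    · rintro ⟨⟨a, b⟩, g⟩ h
      simp only [Finset.mem_sigma, Finset.Nat.mem_antidiagonalTuple,
        Finset.HasAntidiagonal.mem_antidiagonal] at h ⊢
      rw [Fin.sum_cons, h.2, h.1]
    · intro f hf
      simp only [Finset.Nat.mem_antidiagonalTuple, Fin.sum_univ_succ] at hf
      simp [Finset.mem_sigma, Finset.Nat.mem_antidiagonalTuple, Finset.HasAntidiagonal.mem_antidiagonal,
        ← hf, Fin.tail]
    · rintro ⟨⟨a, b⟩, g⟩ h
      simp only [Finset.mem_sigma, Finset.Nat.mem_antidiagonalTuple,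
        Finset.HasAntidiagonal.mem_antidiagonal] at h
      simp [Fin.tail, h.2]
    · intro f hf
      simp [Fin.cons_self_tail]
    · rintro ⟨⟨a, b⟩, g⟩ h
      rw [Fin.prod_univ_succ]
      simp

lemma auxB {K : Type*} [CommSemiring K] (X : PowerSeries K) (m' n : ℕ) (i : Fin (m' + 1)) :
    ∑ f ∈ (Finset.Nat.antidiagonalTuple (m' + 1) n).filter (fun f => n < 2 * f i),
        ∏ j, PowerSeries.coeff (R := K) (f j) X
      = ∑ ℓ ∈ (Finset.range n).filter (fun ℓ => 2 * ℓ < n),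
          PowerSeries.coeff (R := K) ℓ (X ^ m') * PowerSeries.coeff (R := K) (n - ℓ) X := by
  simp_rw [auxA, Finset.sum_mul]
  rw [Finset.sum_sigma']
  refine (Finset.sum_nbij' (fun (f : Fin (m' + 1) → ℕ) => (⟨n - f i, f ∘ i.succAbove⟩ :
      (_ : ℕ) × (Fin m' → ℕ)))
    (fun x => i.insertNth (n - x.1) x.2) ?_ ?_ ?_ ?_ ?_)
  · intro f hf
    simp only [Finset.mem_filter, Finset.Nat.mem_antidiagonalTuple] at hf
    obtain ⟨hsum, hlt⟩ := hf
    have hs : ∑ j, f j = f i + ∑ j, f (i.succAbove j) := Fin.sum_univ_succAbove f i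
    simp only [Finset.mem_sigma, Finset.mem_filter, Finset.mem_range,
      Finset.Nat.mem_antidiagonalTuple, Function.comp]
    omega
  · rintro ⟨ℓ, g⟩ hx
    simp only [Finset.mem_sigma, Finset.mem_filter, Finset.mem_range,
      Finset.Nat.mem_antidiagonalTuple] at hx
    obtain ⟨⟨hln, hl2⟩, hg⟩ := hx
    simp only [Finset.mem_filter, Finset.Nat.mem_antidiagonalTuple]
    rw [Fin.sum_univ_succAbove _ i]
    simp only [Fin.insertNth_apply_same, Fin.insertNth_apply_succAbove, hg]
    omega
  · intro f hf
    simp only [Finset.mem_filter, Finset.Nat.mem_antidiagonalTuple] at hf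
    obtain ⟨hsum, hlt⟩ := hf
    have hs : ∑ j, f j = f i + ∑ j, f (i.succAbove j) := Fin.sum_univ_succAbove f i
    show i.insertNth (n - (n - f i)) (f ∘ i.succAbove) = f
    have h1 : n - (n - f i) = f i := by omega
    rw [h1]
    exact Fin.insertNth_self_removeNth i f
  · rintro ⟨ℓ, g⟩ hx
    simp only [Finset.mem_sigma, Finset.mem_filter, Finset.mem_range,
      Finset.Nat.mem_antidiagonalTuple] at hx
    obtain ⟨⟨hln, hl2⟩, hg⟩ := hx
    have h1 : n - (n - ℓ) = ℓ := by omega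
    simp [Fin.insertNth_apply_same, Fin.insertNth_apply_succAbove, h1, Function.comp]
  · intro f hf
    simp only [Finset.mem_filter, Finset.Nat.mem_antidiagonalTuple] at hf
    obtain ⟨hsum, hlt⟩ := hf
    have hs : ∑ j, f j = f i + ∑ j, f (i.succAbove j) := Fin.sum_univ_succAbove f i
    have h1 : n - (n - f i) = f i := by omega
    rw [Fin.prod_univ_succAbove (fun j => PowerSeries.coeff (R := K) (f j) X) i]
    simp only [Function.comp]
    rw [h1]
    ring

theorem fast_growing_series_stmt5 {K : Type*} [Field K] (X : PowerSeries K)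
    (m : ℕ) (hm : 1 ≤ m) (n : ℕ) :
    PowerSeries.coeff (R := K) n (X ^ m) =
      (∑ f ∈ (Finset.Nat.antidiagonalTuple m n).filter (fun f => ∀ i, 2 * f i ≤ n),
        ∏ i, PowerSeries.coeff (R := K) (f i) X)
      + (m : K) * ∑ ℓ ∈ (Finset.range n).filter (fun ℓ => 2 * ℓ < n),
          PowerSeries.coeff (R := K) ℓ (X ^ (m - 1)) * PowerSeries.coeff (R := K) (n - ℓ) X := by
  obtain ⟨m', rfl⟩ : ∃ m', m = m' + 1 := ⟨m - 1, (Nat.succ_pred_eq_of_pos hm).symm⟩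
  rw [auxA, ← Finset.sum_filter_add_sum_filter_not _ (fun f => ∀ i, 2 * f i ≤ n)]
  congr 1
  have hsplit : (Finset.Nat.antidiagonalTuple (m' + 1) n).filter
        (fun f => ¬ ∀ i, 2 * f i ≤ n)
      = Finset.univ.biUnion (fun i : Fin (m' + 1) =>
        (Finset.Nat.antidiagonalTuple (m' + 1) n).filter (fun f => n < 2 * f i)) := by
    ext f
    simp only [Finset.mem_filter, Finset.mem_biUnion, Finset.mem_univ, true_and,
      not_forall, not_le]
    tauto
  rw [hsplit, Finset.sum_biUnion]
  · simp_rw [auxB]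
    rw [Finset.sum_const, Finset.card_univ, Fintype.card_fin, nsmul_eq_mul]
    push_cast
    ring_nf
  · intro a _ b _ hab
    simp only [Function.onFun]
    rw [Finset.disjoint_left]
    intro f hfa hfb
    simp only [Finset.mem_filter, Finset.Nat.mem_antidiagonalTuple] at hfa hfb
    have : f a + f b ≤ ∑ i, f i := by
      have := Finset.sum_le_sum_of_subset (Finset.subset_univ {a, b})
        (f := f)
      rwa [Finset.sum_pair hab] at this
    omega
end

section
/- Let K be a field, X ∈ K[[z]], and A(t) = Σ_{j≤m} A_j t^j ∈ K[[z]][t] a polynomial with power series coefficients. Let A'(t) = Σ_{j≤m} j·A_j t^{j-1} be its formal derivative. Define δ_n(A,X) := Σ_{j≤m} (A_j · X^{[j]})_n, where (X^{[j]})_n := Σ_{k_1+…+k_j=n, all k_i ≤ n/2} X_{k_1}···X_{k_j}; define ε_n(A,X) := Σ_{j≤m} Σ_{k+p+q=n, q<p≤n/2} j·(A_j)_k·(X^{j-1})_q·X_p; and for λ < n/2 define γ_{n,λ}(A,X) := Σ_{λ ≤ ℓ < n/2} (A'(X))_ℓ · X_{n-ℓ}. Then for all n and all λ < n/2: (A(X))_n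 = Σ_{ℓ < λ} (A'(X))_ℓ·X_{n-ℓ} + γ_{n,λ}(A,X) + δ_n(A,X) + ε_n(A,X). -/
/-- The "core" `(X^[j])_n`: the sum of `X_{k_1} ⋯ X_{k_j}` over tuples with
`k_1 + ⋯ + k_j = n` and every `k_i ≤ n/2`. -/
noncomputable def seriesCore {K : Type*} [Field K] (X : PowerSeries K) (j n : ℕ) : K :=
  ∑ f ∈ (Finset.Nat.antidiagonalTuple j n).filter (fun f => ∀ i, 2 * f i ≤ n),
    ∏ i, PowerSeries.coeff (R := K) (f i) X

/-- `δ_n(A, X) = ∑_{j ≤ m} (A_j · X^[j])_n`. -/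
noncomputable def deltaTerm {K : Type*} [Field K] (A : Polynomial (PowerSeries K))
    (X : PowerSeries K) (m n : ℕ) : K :=
  ∑ j ∈ Finset.range (m + 1),
    ∑ k ∈ Finset.range (n + 1),
      PowerSeries.coeff (R := K) k (A.coeff j) * seriesCore X j (n - k)

/-- `ε_n(A, X) = ∑_{j ≤ m} ∑_{k+p+q = n, q < p ≤ n/2} j (A_j)_k (X^{j-1})_q X_p`. -/
noncomputable def epsTerm {K : Type*} [Field K] (A : Polynomial (PowerSeries K))
    (X : PowerSeries K) (m n : ℕ) : K :=
  ∑ j ∈ Finset.range (m + 1),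
    ∑ k ∈ Finset.range (n + 1), ∑ p ∈ Finset.range (n + 1),
      if k + p ≤ n ∧ n - k - p < p ∧ 2 * p ≤ n then
        (j : K) * PowerSeries.coeff (R := K) k (A.coeff j)
          * PowerSeries.coeff (R := K) (n - k - p) (X ^ (j - 1)) * PowerSeries.coeff (R := K) p X
      else 0

/-- `γ_{n,λ}(A, X) = ∑_{λ ≤ ℓ < n/2} (A'(X))_ℓ X_{n-ℓ}`. -/
noncomputable def gammaTerm {K : Type*} [Field K] (A : Polynomial (PowerSeries K))
    (X : PowerSeries K) (n lam : ℕ) : K :=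
  ∑ ℓ ∈ (Finset.range n).filter (fun ℓ => lam ≤ ℓ ∧ 2 * ℓ < n),
    PowerSeries.coeff (R := K) ℓ (Polynomial.eval X (Polynomial.derivative A))
      * PowerSeries.coeff (R := K) (n - ℓ) X

section Aux

variable {K : Type*} [Field K]

/-- Splitting a sum over antidiagonal tuples according to the value at one coordinate. -/
lemma fgs_tuple_sum_split {M j : ℕ} (i : Fin (j+1)) (F : ℕ → K)
    (P : ℕ → Prop) [DecidablePred P] :
    ∑ f ∈ (Finset.Nat.antidiagonalTuple (j+1) M).filter (fun f => P (f i)),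
      ∏ t, F (f t)
    = ∑ p ∈ (Finset.range (M+1)).filter P,
        F p * ∑ g ∈ Finset.Nat.antidiagonalTuple j (M - p), ∏ t, F (g t) := by
  simp_rw [Finset.mul_sum]
  rw [Finset.sum_sigma']
  refine Finset.sum_nbij' (fun f => ⟨f i, Fin.removeNth i f⟩)
    (fun x => Fin.insertNth i x.1 x.2) ?_ ?_ ?_ ?_ ?_
  · rintro f hf
    simp only [Finset.mem_filter, Finset.Nat.mem_antidiagonalTuple] at hf
    obtain ⟨hsum, hP⟩ := hf
    have h1 : f i ≤ M := by
      rw [← hsum]; exact Finset.single_le_sum (fun t _ => Nat.zero_le _) (Finset.mem_univ i)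
    simp only [Finset.mem_sigma, Finset.mem_filter, Finset.mem_range,
      Finset.Nat.mem_antidiagonalTuple, Fin.removeNth]
    refine ⟨⟨Nat.lt_succ_of_le h1, hP⟩, ?_⟩
    have := Fin.sum_univ_succAbove f i
    omega
  · rintro ⟨p, g⟩ hx
    simp only [Finset.mem_sigma, Finset.mem_filter, Finset.mem_range,
      Finset.Nat.mem_antidiagonalTuple] at hx
    obtain ⟨⟨hp, hP⟩, hg⟩ := hx
    simp only [Finset.mem_filter, Finset.Nat.mem_antidiagonalTuple]
    constructor
    · rw [Fin.sum_univ_succAbove _ i]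
      simp only [Fin.insertNth_apply_same, Fin.insertNth_apply_succAbove]
      omega
    · rw [Fin.insertNth_apply_same]; exact hP
  · intro f hf
    simp only [Fin.insertNth_removeNth]
    exact Function.update_eq_self _ _
  · rintro ⟨p, g⟩ hx
    simp [Fin.insertNth_apply_same, Fin.removeNth_insertNth]
  · intro f hf
    simp only
    rw [Fin.prod_univ_succAbove (fun t => F (f t)) i]
    rfl

lemma fgs_coeff_pow_tuple (X : PowerSeries K) (j M : ℕ) :
    PowerSeries.coeff (R := K) M (X ^ j)
      = ∑ f ∈ Finset.Nat.antidiagonalTuple j M, ∏ i, PowerSeries.coeff (R := K) (f i) X := by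
  induction j generalizing M with
  | zero =>
    cases M with
    | zero => simp [Finset.Nat.antidiagonalTuple_zero_zero]
    | succ M => simp [Finset.Nat.antidiagonalTuple_zero_succ, PowerSeries.coeff_one]
  | succ j ih =>
    have h := fgs_tuple_sum_split (M := M) (0 : Fin (j+1))
      (fun k => PowerSeries.coeff (R := K) k X) (fun _ => True)
    simp only [Finset.filter_true] at h
    rw [h, pow_succ', PowerSeries.coeff_mul,
      Finset.Nat.sum_antidiagonal_eq_sum_range_succ_mk]
    refine Finset.sum_congr rfl fun p hp => ?_
    rw [ih]

/-- Decomposition of the coefficient of a power into core part and a unique "big" entry. -/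
lemma fgs_coeff_pow_decomp (X : PowerSeries K) (j M : ℕ) :
    PowerSeries.coeff (R := K) M (X ^ j) = seriesCore X j M
      + (j : K) * ∑ p ∈ Finset.range (M+1),
          if M < 2*p then PowerSeries.coeff (R := K) (M-p) (X^(j-1)) * PowerSeries.coeff (R := K) p X
          else 0 := by
  cases j with
  | zero =>
    simp only [Nat.cast_zero, zero_mul, add_zero, pow_zero, seriesCore]
    cases M with
    | zero => simp [Finset.Nat.antidiagonalTuple_zero_zero]
    | succ M => simp [Finset.Nat.antidiagonalTuple_zero_succ, PowerSeries.coeff_one]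
  | succ j =>
    rw [fgs_coeff_pow_tuple]
    rw [← Finset.sum_filter_add_sum_filter_not (Finset.Nat.antidiagonalTuple (j+1) M)
      (fun f => ∀ i, 2 * f i ≤ M)]
    congr 1
    have badeq : ∑ f ∈ (Finset.Nat.antidiagonalTuple (j+1) M).filter
        (fun f => ¬ ∀ i, 2 * f i ≤ M), ∏ t, PowerSeries.coeff (R := K) (f t) X
      = ∑ i : Fin (j+1), ∑ f ∈ (Finset.Nat.antidiagonalTuple (j+1) M).filter
          (fun f => M < 2 * f i), ∏ t, PowerSeries.coeff (R := K) (f t) X := by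
      simp_rw [Finset.sum_filter]
      rw [Finset.sum_comm]
      apply Finset.sum_congr rfl
      intro f hf
      rw [Finset.Nat.mem_antidiagonalTuple] at hf
      by_cases hcore : ∀ i, 2 * f i ≤ M
      · rw [if_neg (not_not_intro hcore), Finset.sum_eq_zero]
        intro i _
        have := hcore i
        rw [if_neg (by omega : ¬ M < 2 * f i)]
      · rw [if_pos hcore]
        push_neg at hcore
        obtain ⟨i0, hi0⟩ := hcore
        rw [Finset.sum_eq_single i0]
        · rw [if_pos (by omega)]
        · intro i _ hne
          rw [if_neg]
          intro hi
          have hpair : f i + f i0 ≤ M := by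
            rw [← hf]
            calc f i + f i0 = ∑ t ∈ ({i, i0} : Finset (Fin (j+1))), f t := by
                  rw [Finset.sum_pair hne]
              _ ≤ ∑ t, f t := Finset.sum_le_sum_of_subset (Finset.subset_univ _)
          omega
        · intro h; exact absurd (Finset.mem_univ i0) h
    rw [badeq]
    have heach : ∀ i : Fin (j+1),
        ∑ f ∈ (Finset.Nat.antidiagonalTuple (j+1) M).filter (fun f => M < 2 * f i),
          ∏ t, PowerSeries.coeff (R := K) (f t) X
        = ∑ p ∈ Finset.range (M+1),
            if M < 2*p then PowerSeries.coeff (R := K) (M-p) (X^j) * PowerSeries.coeff (R := K) p X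
            else 0 := by
      intro i
      rw [fgs_tuple_sum_split i (fun k => PowerSeries.coeff (R := K) k X) (fun p => M < 2*p)]
      rw [Finset.sum_filter]
      apply Finset.sum_congr rfl
      intro p hp
      split
      · rw [fgs_coeff_pow_tuple, mul_comm]
      · rfl
    simp_rw [heach]
    rw [Finset.sum_const, Finset.card_univ, Fintype.card_fin, nsmul_eq_mul]
    push_cast
    ring_nf

lemma fgs_coeff_eval (B : Polynomial (PowerSeries K)) {M' : ℕ} (hB : B.natDegree < M')
    (X : PowerSeries K) (n : ℕ) :
    PowerSeries.coeff (R := K) n (Polynomial.eval X B)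
      = ∑ j ∈ Finset.range M', ∑ k ∈ Finset.range (n+1),
          PowerSeries.coeff (R := K) k (B.coeff j) * PowerSeries.coeff (R := K) (n-k) (X^j) := by
  rw [Polynomial.eval_eq_sum_range' hB, map_sum]
  refine Finset.sum_congr rfl fun j _ => ?_
  rw [PowerSeries.coeff_mul, Finset.Nat.sum_antidiagonal_eq_sum_range_succ_mk]

lemma fgs_coeff_deriv_eval (A : Polynomial (PowerSeries K)) {m : ℕ} (hm : A.natDegree ≤ m)
    (X : PowerSeries K) (ℓ : ℕ) :
    PowerSeries.coeff (R := K) ℓ (Polynomial.eval X (Polynomial.derivative A))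
      = ∑ j ∈ Finset.range (m+1), ∑ k ∈ Finset.range (ℓ+1),
          (j:K) * PowerSeries.coeff (R := K) k (A.coeff j)
            * PowerSeries.coeff (R := K) (ℓ-k) (X^(j-1)) := by
  have hd : (Polynomial.derivative A).natDegree < m + 1 :=
    lt_of_le_of_lt (Polynomial.natDegree_derivative_le A) (by omega)
  rw [fgs_coeff_eval _ hd]
  rw [Finset.sum_range_succ]
  conv_rhs => rw [Finset.sum_range_succ']
  have hlast : ∑ k ∈ Finset.range (ℓ+1),
      PowerSeries.coeff (R := K) k ((Polynomial.derivative A).coeff m)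
        * PowerSeries.coeff (R := K) (ℓ-k) (X^m) = 0 := by
    apply Finset.sum_eq_zero
    intro k _
    rw [Polynomial.coeff_derivative,
      Polynomial.coeff_eq_zero_of_natDegree_lt (by omega : A.natDegree < m+1)]
    simp
  rw [hlast, add_zero]
  have hzero : ∑ k ∈ Finset.range (ℓ+1),
      ((0:ℕ):K) * PowerSeries.coeff (R := K) k (A.coeff 0)
        * PowerSeries.coeff (R := K) (ℓ-k) (X^(0-1)) = 0 := by
    apply Finset.sum_eq_zero; intro k _; simp
  rw [hzero, add_zero]
  refine Finset.sum_congr rfl fun i _ => Finset.sum_congr rfl fun k _ => ?_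
  rw [Polynomial.coeff_derivative]
  have hc : ((i : PowerSeries K) + 1) = PowerSeries.C (R := K) ((i:K)+1) := by
    rw [map_add, map_natCast, map_one]
  rw [hc, PowerSeries.coeff_mul_C]
  have : (i + 1 - 1 : ℕ) = i := by omega
  rw [this]
  push_cast
  ring

/-- The gamma side as a canonical triple sum. -/
lemma fgs_gamma_part (A : Polynomial (PowerSeries K)) (X : PowerSeries K) {m : ℕ}
    (hm : A.natDegree ≤ m) (n lam : ℕ) (hlam : 2 * lam < n) :
    (∑ ℓ ∈ Finset.range lam,
        PowerSeries.coeff (R := K) ℓ (Polynomial.eval X (Polynomial.derivative A))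
          * PowerSeries.coeff (R := K) (n - ℓ) X)
      + gammaTerm A X n lam
    = ∑ p ∈ Finset.range (n+1), ∑ j ∈ Finset.range (m+1), ∑ k ∈ Finset.range (n+1),
        if k + p ≤ n ∧ n < 2*p then
          (j:K) * PowerSeries.coeff (R := K) k (A.coeff j)
            * PowerSeries.coeff (R := K) (n-k-p) (X^(j-1)) * PowerSeries.coeff (R := K) p X
        else 0 := by
  set D : ℕ → K := fun ℓ =>
    PowerSeries.coeff (R := K) ℓ (Polynomial.eval X (Polynomial.derivative A)) with hD
  have hn : 0 < n := by omega
  have step_a : (∑ ℓ ∈ Finset.range lam, D ℓ * PowerSeries.coeff (R := K) (n-ℓ) X)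
        + gammaTerm A X n lam
      = ∑ ℓ ∈ Finset.range (n+1),
          if 2*ℓ < n then D ℓ * PowerSeries.coeff (R := K) (n-ℓ) X else 0 := by
    have h1 : (∑ ℓ ∈ Finset.range lam, D ℓ * PowerSeries.coeff (R := K) (n-ℓ) X)
        = ∑ ℓ ∈ Finset.range n,
            if ℓ < lam then D ℓ * PowerSeries.coeff (R := K) (n-ℓ) X else 0 := by
      rw [show Finset.range lam = (Finset.range n).filter (fun ℓ => ℓ < lam) from by
        ext x; simp only [Finset.mem_filter, Finset.mem_range]; omega, Finset.sum_filter]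
    rw [h1, gammaTerm, Finset.sum_filter, ← Finset.sum_add_distrib,
      Finset.sum_range_succ, if_neg (by omega : ¬ 2*n < n), add_zero]
    refine Finset.sum_congr rfl fun ℓ hℓ => ?_
    rw [Finset.mem_range] at hℓ
    split_ifs with h1 h2 h2 <;> first | omega | ring
  rw [step_a]
  have step_b : ∑ ℓ ∈ Finset.range (n+1),
        (if 2*ℓ < n then D ℓ * PowerSeries.coeff (R := K) (n-ℓ) X else 0)
      = ∑ p ∈ Finset.range (n+1),
          if n < 2*p then D (n-p) * PowerSeries.coeff (R := K) p X else 0 := by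
    rw [← Finset.sum_range_reflect]
    refine Finset.sum_congr rfl fun p hp => ?_
    rw [Finset.mem_range] at hp
    have h1 : n + 1 - 1 - p = n - p := by omega
    rw [h1]
    have h2 : n - (n - p) = p := by omega
    rw [h2]
    split_ifs with h3 h4 h4 <;> first | rfl | omega
  rw [step_b]
  refine Finset.sum_congr rfl fun p hp => ?_
  rw [Finset.mem_range] at hp
  by_cases hbig : n < 2*p
  · rw [if_pos hbig]
    simp only [hD]
    rw [fgs_coeff_deriv_eval A hm, Finset.sum_mul]
    refine Finset.sum_congr rfl fun j _ => ?_
    rw [Finset.sum_mul]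
    rw [← Finset.sum_subset (Finset.range_subset_range.2 (by omega : n - p + 1 ≤ n + 1))]
    · refine Finset.sum_congr rfl fun k hk => ?_
      rw [Finset.mem_range] at hk
      rw [if_pos (by omega : k + p ≤ n ∧ n < 2*p)]
      have : n - p - k = n - k - p := by omega
      rw [this]
    · intro k hk hnk
      rw [Finset.mem_range] at hk
      rw [Finset.mem_range, not_lt] at hnk
      rw [if_neg (by omega)]
  · rw [if_neg hbig]
    symm
    apply Finset.sum_eq_zero; intro j _
    apply Finset.sum_eq_zero; intro k _
    rw [if_neg (by omega)]

end Aux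

theorem fast_growing_series_stmt7 {K : Type*} [Field K]
    (A : Polynomial (PowerSeries K)) (X : PowerSeries K) (m : ℕ) (hm : A.natDegree ≤ m)
    (n lam : ℕ) (hlam : 2 * lam < n) :
    PowerSeries.coeff (R := K) n (Polynomial.eval X A) =
      (∑ ℓ ∈ Finset.range lam,
        PowerSeries.coeff (R := K) ℓ (Polynomial.eval X (Polynomial.derivative A))
          * PowerSeries.coeff (R := K) (n - ℓ) X)
      + gammaTerm A X n lam + deltaTerm A X m n + epsTerm A X m n := by
  rw [fgs_coeff_eval A (by omega : A.natDegree < m + 1) X n]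
  have hstep : ∑ j ∈ Finset.range (m+1), ∑ k ∈ Finset.range (n+1),
      PowerSeries.coeff (R := K) k (A.coeff j) * PowerSeries.coeff (R := K) (n-k) (X^j)
    = ∑ j ∈ Finset.range (m+1), ∑ k ∈ Finset.range (n+1),
      PowerSeries.coeff (R := K) k (A.coeff j) * (seriesCore X j (n-k)
        + (j:K) * ∑ p ∈ Finset.range (n-k+1),
            if n-k < 2*p then
              PowerSeries.coeff (R := K) (n-k-p) (X^(j-1)) * PowerSeries.coeff (R := K) p X
            else 0) :=
    Finset.sum_congr rfl fun j _ => Finset.sum_congr rfl fun k _ => by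
      rw [fgs_coeff_pow_decomp]
  rw [hstep]
  simp_rw [mul_add, Finset.sum_add_distrib]
  -- the first double sum is deltaTerm
  have hdelta : ∑ j ∈ Finset.range (m+1), ∑ k ∈ Finset.range (n+1),
      PowerSeries.coeff (R := K) k (A.coeff j) * seriesCore X j (n-k) = deltaTerm A X m n := rfl
  rw [hdelta]
  -- the second double sum splits into epsTerm and the gamma part
  have hT : ∑ j ∈ Finset.range (m+1), ∑ k ∈ Finset.range (n+1),
        PowerSeries.coeff (R := K) k (A.coeff j) * ((j:K) * ∑ p ∈ Finset.range (n-k+1),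
          if n-k < 2*p then
            PowerSeries.coeff (R := K) (n-k-p) (X^(j-1)) * PowerSeries.coeff (R := K) p X
          else 0)
      = epsTerm A X m n
        + ∑ p ∈ Finset.range (n+1), ∑ j ∈ Finset.range (m+1), ∑ k ∈ Finset.range (n+1),
            if k + p ≤ n ∧ n < 2*p then
              (j:K) * PowerSeries.coeff (R := K) k (A.coeff j)
                * PowerSeries.coeff (R := K) (n-k-p) (X^(j-1)) * PowerSeries.coeff (R := K) p X
            else 0 := by
    have hJK : ∀ j, ∀ k ≤ n,
        PowerSeries.coeff (R := K) k (A.coeff j) * ((j:K) * ∑ p ∈ Finset.range (n-k+1),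
          if n-k < 2*p then
            PowerSeries.coeff (R := K) (n-k-p) (X^(j-1)) * PowerSeries.coeff (R := K) p X
          else 0)
        = (∑ p ∈ Finset.range (n+1),
            if k + p ≤ n ∧ n - k - p < p ∧ 2*p ≤ n then
              (j:K) * PowerSeries.coeff (R := K) k (A.coeff j)
                * PowerSeries.coeff (R := K) (n-k-p) (X^(j-1)) * PowerSeries.coeff (R := K) p X
            else 0)
          + ∑ p ∈ Finset.range (n+1),
            if k + p ≤ n ∧ n < 2*p then
              (j:K) * PowerSeries.coeff (R := K) k (A.coeff j)
                * PowerSeries.coeff (R := K) (n-k-p) (X^(j-1)) * PowerSeries.coeff (R := K) p X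
            else 0 := by
      intro j k hk
      have hext : ∑ p ∈ Finset.range (n-k+1),
          (if n-k < 2*p then
            PowerSeries.coeff (R := K) (n-k-p) (X^(j-1)) * PowerSeries.coeff (R := K) p X
          else 0)
        = ∑ p ∈ Finset.range (n+1),
          if p ≤ n-k ∧ n-k < 2*p then
            PowerSeries.coeff (R := K) (n-k-p) (X^(j-1)) * PowerSeries.coeff (R := K) p X
          else 0 := by
        rw [← Finset.sum_subset (Finset.range_subset_range.2 (by omega : n - k + 1 ≤ n + 1))]
        · refine Finset.sum_congr rfl fun p hp => ?_
          rw [Finset.mem_range] at hp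
          split_ifs with h1 h2 h2 <;> first | rfl | omega
        · intro p hp hnp
          rw [Finset.mem_range] at hp
          rw [Finset.mem_range, not_lt] at hnp
          rw [if_neg (by omega)]
      rw [hext, Finset.mul_sum, Finset.mul_sum, ← Finset.sum_add_distrib]
      refine Finset.sum_congr rfl fun p hp => ?_
      rw [Finset.mem_range] at hp
      split_ifs with h1 h2 h3 h2 h3 h3 h3 <;> first | omega | ring
    calc ∑ j ∈ Finset.range (m+1), ∑ k ∈ Finset.range (n+1),
          PowerSeries.coeff (R := K) k (A.coeff j) * ((j:K) * ∑ p ∈ Finset.range (n-k+1),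
            if n-k < 2*p then
              PowerSeries.coeff (R := K) (n-k-p) (X^(j-1)) * PowerSeries.coeff (R := K) p X
            else 0)
        = ∑ j ∈ Finset.range (m+1), ∑ k ∈ Finset.range (n+1),
            ((∑ p ∈ Finset.range (n+1),
              if k + p ≤ n ∧ n - k - p < p ∧ 2*p ≤ n then
                (j:K) * PowerSeries.coeff (R := K) k (A.coeff j)
                  * PowerSeries.coeff (R := K) (n-k-p) (X^(j-1)) * PowerSeries.coeff (R := K) p X
              else 0)
            + ∑ p ∈ Finset.range (n+1),
              if k + p ≤ n ∧ n < 2*p then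
                (j:K) * PowerSeries.coeff (R := K) k (A.coeff j)
                  * PowerSeries.coeff (R := K) (n-k-p) (X^(j-1)) * PowerSeries.coeff (R := K) p X
              else 0) := by
          refine Finset.sum_congr rfl fun j _ => Finset.sum_congr rfl fun k hk => ?_
          rw [Finset.mem_range] at hk
          exact hJK j k (by omega)
      _ = epsTerm A X m n
          + ∑ j ∈ Finset.range (m+1), ∑ k ∈ Finset.range (n+1),
              ∑ p ∈ Finset.range (n+1),
              if k + p ≤ n ∧ n < 2*p then
                (j:K) * PowerSeries.coeff (R := K) k (A.coeff j)
                  * PowerSeries.coeff (R := K) (n-k-p) (X^(j-1)) * PowerSeries.coeff (R := K) p X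
              else 0 := by
          simp_rw [Finset.sum_add_distrib]
          rfl
      _ = _ := by
          congr 1
          have h1 : ∑ j ∈ Finset.range (m+1), ∑ k ∈ Finset.range (n+1),
              ∑ p ∈ Finset.range (n+1),
              (if k + p ≤ n ∧ n < 2*p then
                (j:K) * PowerSeries.coeff (R := K) k (A.coeff j)
                  * PowerSeries.coeff (R := K) (n-k-p) (X^(j-1)) * PowerSeries.coeff (R := K) p X
              else 0)
            = ∑ j ∈ Finset.range (m+1), ∑ p ∈ Finset.range (n+1),
              ∑ k ∈ Finset.range (n+1),
              (if k + p ≤ n ∧ n < 2*p then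
                (j:K) * PowerSeries.coeff (R := K) k (A.coeff j)
                  * PowerSeries.coeff (R := K) (n-k-p) (X^(j-1)) * PowerSeries.coeff (R := K) p X
              else 0) :=
            Finset.sum_congr rfl fun j _ => Finset.sum_comm
          rw [h1]
          exact Finset.sum_comm
  rw [hT, fgs_gamma_part A X hm n lam hlam]
  ring
end

section
/- Let K be a field of characteristic 0 with an absolute value, R a subring of K[[z]], and ρ : ℕ → ℝ_{>0} monotone increasing with C_n = O(ρ(n)) for every C ∈ R. Suppose X ∈ K[[z]] satisfies |X_0| ≥ 1 and, for every fixed λ ∈ ℕ and m ∈ ℕ, as n → ∞: (i) ρ(n)·(Σ_{ℓ ≤ n/2} |X_ℓ|)^m = o(|X_{n-λ}|), and (ii) ρ(n)·|X_{n-λ-1}|·(Σ_{ℓ < n/2} |X_ℓ|)^m = o(|X_{n-λ}|). Then X is transcendental over R. -/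
open Asymptotics Filter Finset

section FGSaux

variable {K : Type*} [Field K]

lemma fgs_l1_mul (v : AbsoluteValue K ℝ) (f g : PowerSeries K) (n : ℕ) :
    ∑ i ∈ range (n+1), v (PowerSeries.coeff (R := K) i (f*g)) ≤
    (∑ i ∈ range (n+1), v (PowerSeries.coeff (R := K) i f)) *
      (∑ i ∈ range (n+1), v (PowerSeries.coeff (R := K) i g)) := by
  have h1 : ∀ i ∈ range (n+1), v (PowerSeries.coeff (R := K) i (f*g)) ≤
      ∑ p ∈ Finset.HasAntidiagonal.antidiagonal i, v (PowerSeries.coeff (R := K) p.1 f) * v (PowerSeries.coeff (R := K) p.2 g) := by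
    intro i _
    rw [PowerSeries.coeff_mul]
    refine (v.sum_le _ _).trans (le_of_eq ?_)
    exact Finset.sum_congr rfl fun p _ => v.map_mul _ _
  refine (Finset.sum_le_sum h1).trans ?_
  have hdisj : (↑(range (n+1)) : Set ℕ).PairwiseDisjoint (fun i => (Finset.HasAntidiagonal.antidiagonal i : Finset (ℕ × ℕ))) := by
    intro a _ b _ hab
    simp only [Function.onFun, Finset.disjoint_left]
    intro p hpa hpb
    rw [Finset.HasAntidiagonal.mem_antidiagonal] at hpa hpb
    exact hab (hpa ▸ hpb)
  rw [Finset.sum_mul_sum, ← Finset.sum_product', ← Finset.sum_biUnion hdisj]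
  apply Finset.sum_le_sum_of_subset_of_nonneg
  · intro p hp
    simp only [Finset.mem_biUnion, Finset.HasAntidiagonal.mem_antidiagonal, Finset.mem_range] at hp
    obtain ⟨i, hi, hpi⟩ := hp
    simp only [Finset.mem_product, Finset.mem_range]
    omega
  · intro p _ _
    positivity

lemma fgs_l1_pow (v : AbsoluteValue K ℝ) (f : PowerSeries K) (n : ℕ)
    (hmul : ∀ f g : PowerSeries K,
      ∑ i ∈ range (n+1), v (PowerSeries.coeff (R := K) i (f*g)) ≤
      (∑ i ∈ range (n+1), v (PowerSeries.coeff (R := K) i f)) *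
        (∑ i ∈ range (n+1), v (PowerSeries.coeff (R := K) i g))) :
    ∀ j : ℕ, ∑ i ∈ range (n+1), v (PowerSeries.coeff (R := K) i (f^j)) ≤
      (1 + ∑ i ∈ range (n+1), v (PowerSeries.coeff (R := K) i f)) ^ j := by
  intro j
  induction j with
  | zero =>
    simp only [pow_zero]
    have : ∀ i ∈ range (n+1), v (PowerSeries.coeff (R := K) i (1 : PowerSeries K)) =
        if i = 0 then 1 else 0 := by
      intro i _
      rw [PowerSeries.coeff_one]
      split <;> simp
    rw [Finset.sum_congr rfl this, Finset.sum_ite_eq' (range (n+1)) 0 (fun _ => (1:ℝ))]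
    simp
  | succ j ih =>
    rw [pow_succ]
    refine (hmul _ _).trans ?_
    have h0 : (0:ℝ) ≤ ∑ i ∈ range (n+1), v (PowerSeries.coeff (R := K) i f) :=
      Finset.sum_nonneg fun i _ => v.nonneg _
    have h1 : ∑ i ∈ range (n+1), v (PowerSeries.coeff (R := K) i (f^j)) ≥ 0 :=
      Finset.sum_nonneg fun i _ => v.nonneg _
    calc (∑ i ∈ range (n+1), v (PowerSeries.coeff (R := K) i (f^j))) *
          (∑ i ∈ range (n+1), v (PowerSeries.coeff (R := K) i f))
        ≤ (1 + ∑ i ∈ range (n+1), v (PowerSeries.coeff (R := K) i f)) ^ j *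
          (1 + ∑ i ∈ range (n+1), v (PowerSeries.coeff (R := K) i f)) := by
          apply mul_le_mul ih (by linarith) h0 (by positivity)
      _ = _ := by rw [pow_succ]

lemma fgs_coeff_bound (v : AbsoluteValue K ℝ) (ρ : ℕ → ℝ) (hρpos : ∀ n, 0 < ρ n)
    (C : PowerSeries K)
    (h : (fun n => v (PowerSeries.coeff (R := K) n C)) =O[atTop] ρ) :
    ∃ c : ℝ, 0 < c ∧ ∀ i, v (PowerSeries.coeff (R := K) i C) ≤ c * ρ i := by
  obtain ⟨c0, hc0⟩ := h.isBigOWith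
  rw [isBigOWith_iff, eventually_atTop] at hc0
  obtain ⟨N, hN⟩ := hc0
  refine ⟨max c0 1 + ∑ i ∈ range N, v (PowerSeries.coeff (R := K) i C) / ρ i, ?_, ?_⟩
  · have : (0:ℝ) ≤ ∑ i ∈ range N, v (PowerSeries.coeff (R := K) i C) / ρ i :=
      Finset.sum_nonneg fun i _ => div_nonneg (v.nonneg _) (hρpos i).le
    have h1 : (1:ℝ) ≤ max c0 1 := le_max_right _ _
    linarith
  · intro i
    have hsumnn : (0:ℝ) ≤ ∑ i ∈ range N, v (PowerSeries.coeff (R := K) i C) / ρ i :=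
      Finset.sum_nonneg fun i _ => div_nonneg (v.nonneg _) (hρpos i).le
    rcases le_or_gt N i with hi | hi
    · have := hN i hi
      rw [Real.norm_eq_abs, Real.norm_eq_abs, abs_of_nonneg (v.nonneg _),
        abs_of_nonneg (hρpos i).le] at this
      have h2 : c0 * ρ i ≤ (max c0 1 + ∑ i ∈ range N, v (PowerSeries.coeff (R := K) i C) / ρ i) * ρ i := by
        apply mul_le_mul_of_nonneg_right _ (hρpos i).le
        have : c0 ≤ max c0 1 := le_max_left _ _
        linarith
      linarith
    · have hmem : v (PowerSeries.coeff (R := K) i C) / ρ i ≤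
          ∑ k ∈ range N, v (PowerSeries.coeff (R := K) k C) / ρ k :=
        Finset.single_le_sum (f := fun k => v (PowerSeries.coeff (R := K) k C) / ρ k)
          (fun k _ => div_nonneg (v.nonneg _) (hρpos k).le) (Finset.mem_range.mpr hi)
      have heq : v (PowerSeries.coeff (R := K) i C) = (v (PowerSeries.coeff (R := K) i C) / ρ i) * ρ i := by
        rw [div_mul_cancel₀ _ (hρpos i).ne']
      rw [heq]
      apply mul_le_mul_of_nonneg_right _ (hρpos i).le
      have h1 : (1:ℝ) ≤ max c0 1 := le_max_right _ _
      linarith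

lemma fgs_eval_bound (v : AbsoluteValue K ℝ) (R : Subring (PowerSeries K))
    (ρ : ℕ → ℝ) (hρpos : ∀ n, 0 < ρ n) (hρmono : Monotone ρ)
    (hR : ∀ C ∈ R, (fun n => v (PowerSeries.coeff (R := K) n C)) =O[atTop] ρ)
    (A : Polynomial (PowerSeries K)) (hA : ∀ j, A.coeff j ∈ R) :
    ∃ c : ℝ, 0 < c ∧ ∀ (f : PowerSeries K) (n : ℕ),
      v (PowerSeries.coeff (R := K) n (Polynomial.eval f A)) ≤
        c * ρ n * (1 + ∑ i ∈ range (n+1), v (PowerSeries.coeff (R := K) i f)) ^ A.natDegree := by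
  have H : ∀ j, ∃ c : ℝ, 0 < c ∧ ∀ i, v (PowerSeries.coeff (R := K) i (A.coeff j)) ≤ c * ρ i :=
    fun j => fgs_coeff_bound v ρ hρpos _ (hR _ (hA j))
  choose cf hcfpos hcf using H
  set D := A.natDegree with hD
  refine ⟨∑ j ∈ range (D+1), cf j, Finset.sum_pos (fun j _ => hcfpos j) nonempty_range_add_one, ?_⟩
  intro f n
  set T : ℝ := ∑ i ∈ range (n+1), v (PowerSeries.coeff (R := K) i f) with hT
  have hTnn : 0 ≤ T := Finset.sum_nonneg fun i _ => v.nonneg _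
  have h1T : (1:ℝ) ≤ 1 + T := by linarith
  -- bound for each monomial
  have hmono : ∀ j : ℕ, v (PowerSeries.coeff (R := K) n (A.coeff j * f ^ j)) ≤
      cf j * ρ n * (1 + T) ^ j := by
    intro j
    rw [PowerSeries.coeff_mul]
    refine (v.sum_le _ _).trans ?_
    have hstep : ∀ p ∈ Finset.HasAntidiagonal.antidiagonal n,
        v (PowerSeries.coeff (R := K) p.1 (A.coeff j) * PowerSeries.coeff (R := K) p.2 (f^j)) ≤
        cf j * ρ n * v (PowerSeries.coeff (R := K) p.2 (f^j)) := by
      intro p hp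
      rw [v.map_mul]
      apply mul_le_mul_of_nonneg_right _ (v.nonneg _)
      refine (hcf j p.1).trans ?_
      apply mul_le_mul_of_nonneg_left _ (hcfpos j).le
      exact hρmono (by
        rw [Finset.HasAntidiagonal.mem_antidiagonal] at hp; omega)
    refine (Finset.sum_le_sum hstep).trans ?_
    rw [← Finset.mul_sum]
    apply mul_le_mul_of_nonneg_left _ (mul_nonneg (hcfpos j).le (hρpos n).le)
    have hre : ∑ p ∈ Finset.HasAntidiagonal.antidiagonal n, v (PowerSeries.coeff (R := K) p.2 (f^j)) =
        ∑ i ∈ range (n+1), v (PowerSeries.coeff (R := K) i (f^j)) := by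
      rw [Finset.Nat.sum_antidiagonal_eq_sum_range_succ_mk]
      have := Finset.sum_range_reflect (fun i => v (PowerSeries.coeff (R := K) i (f^j))) (n+1)
      simpa using this
    rw [hre]
    exact fgs_l1_pow v f n (fun f g => fgs_l1_mul v f g n) j
  -- sum over monomials
  rw [Polynomial.eval_eq_sum_range, map_sum]
  refine (v.sum_le _ _).trans ?_
  have hlast : ∀ j ∈ range (D+1), v (PowerSeries.coeff (R := K) n (A.coeff j * f ^ j)) ≤
      cf j * (ρ n * (1 + T) ^ D) := by
    intro j hj
    refine (hmono j).trans ?_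
    rw [mul_assoc]
    apply mul_le_mul_of_nonneg_left _ (hcfpos j).le
    apply mul_le_mul_of_nonneg_left _ (hρpos n).le
    exact pow_le_pow_right₀ h1T (by simpa [Nat.lt_succ_iff] using hj)
  refine (Finset.sum_le_sum hlast).trans ?_
  rw [← Finset.sum_mul]
  ring_nf
  exact le_refl _


lemma fgs_geom (u : ℕ → ℝ) (hu : ∀ k, 0 ≤ u k) (a : ℕ)
    (h : ∀ k, a ≤ k → 2 * u k ≤ u (k+1)) :
    ∀ b : ℕ, ∀ s : Finset ℕ, (∀ k ∈ s, a ≤ k ∧ k ≤ b) → ∑ k ∈ s, u k ≤ 2 * u b := by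
  have key : ∀ b : ℕ, ∑ k ∈ (range (b+1)).filter (fun k => a ≤ k), u k ≤ 2 * u b := by
    intro b
    induction b with
    | zero =>
      have h1 : ∑ k ∈ (range 1).filter (fun k => a ≤ k), u k ≤ ∑ k ∈ range 1, u k :=
        Finset.sum_le_sum_of_subset_of_nonneg (Finset.filter_subset _ _) (fun k _ _ => hu k)
      rw [Finset.sum_range_one] at h1
      have := hu 0
      linarith
    | succ b ih =>
      rcases le_or_gt a (b+1) with hab | hab
      · rw [Finset.range_add_one, Finset.filter_insert, if_pos hab, Finset.sum_insert (by
          simp only [Finset.mem_filter, Finset.mem_range]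
          omega)]
        rcases le_or_gt a b with hab2 | hab2
        · have := h b hab2
          linarith
        · have hempty : ∑ k ∈ (range (b+1)).filter (fun k => a ≤ k), u k = 0 := by
            apply Finset.sum_eq_zero
            intro k hk
            simp only [Finset.mem_filter, Finset.mem_range] at hk
            omega
          rw [hempty]
          have := hu (b+1)
          linarith
      · have hempty : ∑ k ∈ (range (b+2)).filter (fun k => a ≤ k), u k = 0 := by
          apply Finset.sum_eq_zero
          intro k hk
          simp only [Finset.mem_filter, Finset.mem_range] at hk
          omega
        rw [hempty]
        have := hu (b+1)
        linarith
  intro b s hs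
  refine le_trans (Finset.sum_le_sum_of_subset_of_nonneg ?_ (fun k _ _ => hu k)) (key b)
  intro k hk
  simp only [Finset.mem_filter, Finset.mem_range]
  have := hs k hk
  omega

end FGSaux

open Asymptotics Filter in
theorem fast_growing_series_stmt11 {K : Type*} [Field K] [CharZero K]
    (v : AbsoluteValue K ℝ) (R : Subring (PowerSeries K)) (X : PowerSeries K)
    (ρ : ℕ → ℝ) (hρpos : ∀ n, 0 < ρ n) (hρmono : Monotone ρ)
    (hR : ∀ C ∈ R, (fun n => v (PowerSeries.coeff (R := K) n C)) =O[atTop] ρ)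
    (hX0 : 1 ≤ v (PowerSeries.coeff (R := K) 0 X))
    (hcond1 : ∀ lam m : ℕ,
      (fun n => ρ n *
          (∑ ℓ ∈ (Finset.range (n + 1)).filter (fun ℓ => 2 * ℓ ≤ n),
            v (PowerSeries.coeff (R := K) ℓ X)) ^ m)
        =o[atTop] fun n => v (PowerSeries.coeff (R := K) (n - lam) X))
    (hcond2 : ∀ lam m : ℕ,
      (fun n => ρ n * v (PowerSeries.coeff (R := K) (n - lam - 1) X) *
          (∑ ℓ ∈ (Finset.range n).filter (fun ℓ => 2 * ℓ < n),
            v (PowerSeries.coeff (R := K) ℓ X)) ^ m)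
        =o[atTop] fun n => v (PowerSeries.coeff (R := K) (n - lam) X)) :
    ∀ A : Polynomial (PowerSeries K), (∀ j, A.coeff j ∈ R) →
      Polynomial.eval X A = 0 → A = 0 := by
  classical
  suffices H : ∀ d : ℕ, ∀ A : Polynomial (PowerSeries K), A.natDegree ≤ d →
      (∀ j, A.coeff j ∈ R) → Polynomial.eval X A = 0 → A = 0 by
    intro A hA hev
    exact H A.natDegree A le_rfl hA hev
  -- geometric growth of coefficients from hcond2 0 0
  have hgeomN : ∃ N₀ : ℕ, ∀ k, N₀ ≤ k →
      2 * v (PowerSeries.coeff (R := K) k X) ≤ v (PowerSeries.coeff (R := K) (k+1) X) := by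
    have h := IsLittleO.def (hcond2 0 0) (half_pos (hρpos 0))
    rw [eventually_atTop] at h
    obtain ⟨N, hN⟩ := h
    refine ⟨N, fun k hk => ?_⟩
    have h1 := hN (k+1) (by omega)
    simp only [pow_zero, mul_one, Nat.sub_zero, Nat.add_sub_cancel] at h1
    rw [Real.norm_eq_abs, Real.norm_eq_abs, abs_of_nonneg (v.nonneg _)] at h1
    have h2 : ρ (k+1) * v (PowerSeries.coeff (R := K) k X) ≤ ρ 0 / 2 * v (PowerSeries.coeff (R := K) (k+1) X) :=
      (le_abs_self _).trans h1
    have h3 : ρ 0 ≤ ρ (k+1) := hρmono (Nat.zero_le _)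
    have h4 : 0 < ρ 0 := hρpos 0
    have h5 : 0 ≤ v (PowerSeries.coeff (R := K) k X) := v.nonneg _
    have h6 : 0 ≤ v (PowerSeries.coeff (R := K) (k+1) X) := v.nonneg _
    nlinarith
  obtain ⟨N₀, hgeom⟩ := hgeomN
  intro d
  induction d using Nat.strong_induction_on with
  | _ d ih =>
  intro A hdeg hA hev
  by_contra hA0
  rcases Nat.eq_zero_or_pos A.natDegree with h0 | hpos
  · obtain ⟨a, ha⟩ := Polynomial.natDegree_eq_zero.mp h0
    rw [← ha, Polynomial.eval_C] at hev
    exact hA0 (by rw [← ha, hev, map_zero])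
  have hd1 : A.natDegree ≠ 0 := by omega
  set B := Polynomial.derivative A with hBdef
  have hBcoeff : ∀ j, B.coeff j ∈ R := by
    intro j
    rw [hBdef, Polynomial.coeff_derivative]
    exact R.mul_mem (hA (j+1)) (R.add_mem (natCast_mem R j) R.one_mem)
  have hB0 : B ≠ 0 := by
    intro hB
    have hcd : A.coeff A.natDegree ≠ 0 := by
      rw [← Polynomial.leadingCoeff]
      exact Polynomial.leadingCoeff_ne_zero.mpr hA0
    have h1 : B.coeff (A.natDegree - 1) =
        A.coeff A.natDegree * (((A.natDegree - 1 : ℕ) : PowerSeries K) + 1) := by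
      rw [hBdef, Polynomial.coeff_derivative]
      congr 2
      omega
    have h2 : (((A.natDegree - 1 : ℕ) : PowerSeries K) + 1) ≠ 0 := by
      intro h
      have hc := congrArg (PowerSeries.constantCoeff (R := K)) h
      simp only [map_add, map_one, map_natCast, map_zero] at hc
      exact Nat.cast_add_one_ne_zero (A.natDegree - 1) hc
    rw [hB, Polynomial.coeff_zero] at h1
    exact (mul_ne_zero hcd h2) h1.symm
  have hBdeg : B.natDegree < d :=
    lt_of_lt_of_le (Polynomial.natDegree_derivative_lt hd1) hdeg
  set Y := Polynomial.eval X B with hYdef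
  have hY0 : Y ≠ 0 := fun h => hB0 (ih B.natDegree hBdeg B le_rfl hBcoeff h)
  have hex : ∃ μ, PowerSeries.coeff (R := K) μ Y ≠ 0 := by
    by_contra hc
    push_neg at hc
    exact hY0 (PowerSeries.ext fun μ => by rw [hc μ, map_zero])
  set lam := Nat.find hex with hlamdef
  have hlam : PowerSeries.coeff (R := K) lam Y ≠ 0 := Nat.find_spec hex
  have hmin : ∀ μ, μ < lam → PowerSeries.coeff (R := K) μ Y = 0 := fun μ h =>
    not_not.mp (Nat.find_min hex h)
  have hYpos : 0 < v (PowerSeries.coeff (R := K) lam Y) := v.pos hlam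
  obtain ⟨c₁, hc₁pos, hc₁⟩ := fgs_eval_bound v R ρ hρpos hρmono hR A hA
  obtain ⟨c₂, hc₂pos, hc₂⟩ := fgs_eval_bound v R ρ hρpos hρmono hR B hBcoeff
  set dA := A.natDegree with hdA
  set dB := B.natDegree with hdB
  set vY := v (PowerSeries.coeff (R := K) lam Y) with hvY
  set q₁ : ℝ := c₁ * 2 ^ dA with hq₁
  set q₂ : ℝ := 2 * (c₂ * 2 ^ dB) with hq₂
  have hq₁pos : 0 < q₁ := by positivity
  have hq₂pos : 0 < q₂ := by positivity
  have hε₁ : (0:ℝ) < vY / (4 * q₁) := by positivity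
  have hε₂ : (0:ℝ) < vY / (4 * q₂) := by positivity
  have E1 := IsLittleO.def (hcond1 lam dA) hε₁
  have E2 := IsLittleO.def (hcond2 lam dB) hε₂
  have E3 := IsLittleO.def (hcond1 lam 0) one_pos
  obtain ⟨n, hn⟩ := (((E1.and E2).and E3).and (eventually_ge_atTop (2*N₀ + 2*lam + 2))).exists
  obtain ⟨⟨⟨hn1, hn2⟩, hn3⟩, hnge⟩ := hn
  -- notation
  set Sn : ℝ := ∑ ℓ ∈ (Finset.range (n + 1)).filter (fun ℓ => 2 * ℓ ≤ n),
      v (PowerSeries.coeff (R := K) ℓ X) with hSn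
  set S'n : ℝ := ∑ ℓ ∈ (Finset.range n).filter (fun ℓ => 2 * ℓ < n),
      v (PowerSeries.coeff (R := K) ℓ X) with hS'n
  have hSnn : 0 ≤ Sn := Finset.sum_nonneg fun i _ => v.nonneg _
  have hS'nn : 0 ≤ S'n := Finset.sum_nonneg fun i _ => v.nonneg _
  have hS1 : 1 ≤ Sn := by
    refine hX0.trans ?_
    refine Finset.single_le_sum (f := fun ℓ => v (PowerSeries.coeff (R := K) ℓ X))
      (fun i _ => v.nonneg _) ?_
    simp only [Finset.mem_filter, Finset.mem_range]
    omega
  have hS'1 : 1 ≤ S'n := by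
    refine hX0.trans ?_
    refine Finset.single_le_sum (f := fun ℓ => v (PowerSeries.coeff (R := K) ℓ X))
      (fun i _ => v.nonneg _) ?_
    simp only [Finset.mem_filter, Finset.mem_range]
    omega
  -- clean the little-o statements
  have hXpos : 0 < v (PowerSeries.coeff (R := K) (n - lam) X) := by
    simp only [pow_zero, mul_one, one_mul] at hn3
    rw [Real.norm_eq_abs, Real.norm_eq_abs, abs_of_nonneg (v.nonneg _)] at hn3
    calc (0:ℝ) < ρ n := hρpos n
    _ ≤ |ρ n| := le_abs_self _
    _ ≤ _ := hn3
  have hb1 : ρ n * Sn ^ dA ≤ vY / (4 * q₁) * v (PowerSeries.coeff (R := K) (n - lam) X) := by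
    rw [Real.norm_eq_abs, Real.norm_eq_abs, abs_of_nonneg (v.nonneg _)] at hn1
    exact (le_abs_self _).trans hn1
  have hb2 : ρ n * v (PowerSeries.coeff (R := K) (n - lam - 1) X) * S'n ^ dB ≤
      vY / (4 * q₂) * v (PowerSeries.coeff (R := K) (n - lam) X) := by
    rw [Real.norm_eq_abs, Real.norm_eq_abs, abs_of_nonneg (v.nonneg _)] at hn2
    exact (le_abs_self _).trans hn2
  -- truncation set-up
  set t := n / 2 with ht
  set P : PowerSeries K := ((PowerSeries.trunc (t+1) X : Polynomial K) : PowerSeries K) with hP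
  set Q : PowerSeries K := X - P with hQ
  have hPco : ∀ ℓ, PowerSeries.coeff (R := K) ℓ P =
      if ℓ ≤ t then PowerSeries.coeff (R := K) ℓ X else 0 := by
    intro ℓ
    rw [hP, Polynomial.coeff_coe, PowerSeries.coeff_trunc]
    simp [Nat.lt_succ_iff]
  have hQco0 : ∀ ℓ, ℓ ≤ t → PowerSeries.coeff (R := K) ℓ Q = 0 := by
    intro ℓ h
    rw [hQ, map_sub, hPco ℓ, if_pos h, sub_self]
  have hQco : ∀ ℓ, t < ℓ → PowerSeries.coeff (R := K) ℓ Q = PowerSeries.coeff (R := K) ℓ X := by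
    intro ℓ h
    rw [hQ, map_sub, hPco ℓ, if_neg (by omega), sub_zero]
  obtain ⟨kk, hkk⟩ := Polynomial.binomExpansion A P Q
  have hPQ : P + Q = X := by rw [hQ]; ring
  rw [hPQ, ← hBdef] at hkk
  have hQQ : ∀ m, m ≤ n → PowerSeries.coeff (R := K) m (Q * Q) = 0 := by
    intro m hm
    rw [PowerSeries.coeff_mul]
    apply Finset.sum_eq_zero
    intro p hp
    rw [Finset.HasAntidiagonal.mem_antidiagonal] at hp
    rcases le_or_gt p.1 t with h1 | h1
    · rw [hQco0 p.1 h1, zero_mul]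
    · rw [hQco0 p.2 (by omega), mul_zero]
  have hQ2n : PowerSeries.coeff (R := K) n (kk * Q^2) = 0 := by
    rw [sq, PowerSeries.coeff_mul]
    apply Finset.sum_eq_zero
    intro p hp
    rw [Finset.HasAntidiagonal.mem_antidiagonal] at hp
    rw [hQQ p.2 (by omega), mul_zero]
  obtain ⟨sdiv, hs⟩ := Polynomial.sub_dvd_eval_sub X P B
  rw [← hQ] at hs
  have hagree : ∀ μ, μ ≤ t →
      PowerSeries.coeff (R := K) μ (Polynomial.eval P B) = PowerSeries.coeff (R := K) μ Y := by
    intro μ hμ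
    have h1 : PowerSeries.coeff (R := K) μ (Polynomial.eval X B - Polynomial.eval P B) = 0 := by
      rw [hs, PowerSeries.coeff_mul]
      apply Finset.sum_eq_zero
      intro p hp
      rw [Finset.HasAntidiagonal.mem_antidiagonal] at hp
      rw [hQco0 p.1 (by omega), zero_mul]
    rw [map_sub] at h1
    rw [hYdef]
    exact (sub_eq_zero.mp h1).symm
  have hmulco : PowerSeries.coeff (R := K) n (Polynomial.eval P B * Q) =
      ∑ k ∈ range (n+1), PowerSeries.coeff (R := K) k (Polynomial.eval P B) *
        PowerSeries.coeff (R := K) (n - k) Q := by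
    rw [PowerSeries.coeff_mul, Finset.Nat.sum_antidiagonal_eq_sum_range_succ_mk]
  set F := (range (n+1)).filter (fun k => 2*k < n ∧ lam ≤ k) with hF
  have hsplit : ∑ k ∈ range (n+1), PowerSeries.coeff (R := K) k (Polynomial.eval P B) *
        PowerSeries.coeff (R := K) (n - k) Q
      = ∑ k ∈ F, PowerSeries.coeff (R := K) k Y * PowerSeries.coeff (R := K) (n - k) X := by
    rw [← Finset.sum_filter_add_sum_filter_not (range (n+1)) (fun k => 2*k < n ∧ lam ≤ k)
      (fun k => PowerSeries.coeff (R := K) k (Polynomial.eval P B) * PowerSeries.coeff (R := K) (n - k) Q)]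
    have hz : ∑ k ∈ (range (n+1)).filter (fun k => ¬(2*k < n ∧ lam ≤ k)),
        PowerSeries.coeff (R := K) k (Polynomial.eval P B) * PowerSeries.coeff (R := K) (n - k) Q = 0 := by
      apply Finset.sum_eq_zero
      intro k hk
      simp only [Finset.mem_filter, Finset.mem_range, not_and, not_le] at hk
      rcases le_or_gt n (2*k) with hbig | hsmall
      · rw [hQco0 (n-k) (by omega), mul_zero]
      · rw [hagree k (by omega), hmin k (hk.2 hsmall), zero_mul]
    rw [hz, add_zero]
    apply Finset.sum_congr rfl
    intro k hk
    rw [Finset.mem_filter, Finset.mem_range] at hk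
    rw [hagree k (by omega), hQco (n-k) (by omega)]
  have hlamF : lam ∈ F := by
    rw [hF, Finset.mem_filter, Finset.mem_range]
    omega
  have hsum_split : ∑ k ∈ F, PowerSeries.coeff (R := K) k Y * PowerSeries.coeff (R := K) (n - k) X =
      PowerSeries.coeff (R := K) lam Y * PowerSeries.coeff (R := K) (n - lam) X +
      ∑ k ∈ F.erase lam, PowerSeries.coeff (R := K) k Y * PowerSeries.coeff (R := K) (n - k) X :=
    (Finset.add_sum_erase F _ hlamF).symm
  have hmain : PowerSeries.coeff (R := K) lam Y * PowerSeries.coeff (R := K) (n - lam) X =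
      -(PowerSeries.coeff (R := K) n (Polynomial.eval P A) +
        ∑ k ∈ F.erase lam, PowerSeries.coeff (R := K) k Y * PowerSeries.coeff (R := K) (n - k) X) := by
    have h0 := congrArg (PowerSeries.coeff (R := K) n) hkk
    rw [hev, map_zero, map_add, map_add, hQ2n, add_zero, hmulco, hsplit, hsum_split] at h0
    linear_combination -h0
  -- estimates
  have hTP : ∑ i ∈ range (n+1), v (PowerSeries.coeff (R := K) i P) = Sn := by
    rw [← Finset.sum_filter_add_sum_filter_not (range (n+1)) (fun i => 2*i ≤ n)
      (fun i => v (PowerSeries.coeff (R := K) i P))]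
    have h1 : ∑ i ∈ (range (n+1)).filter (fun i => ¬ 2*i ≤ n),
        v (PowerSeries.coeff (R := K) i P) = 0 := by
      apply Finset.sum_eq_zero
      intro i hi
      simp only [Finset.mem_filter, Finset.mem_range, not_le] at hi
      rw [hPco i, if_neg (by omega), map_zero]
    rw [h1, add_zero, hSn]
    apply Finset.sum_congr rfl
    intro i hi
    simp only [Finset.mem_filter, Finset.mem_range] at hi
    rw [hPco i, if_pos (by omega)]
  have bound1 : v (PowerSeries.coeff (R := K) n (Polynomial.eval P A)) ≤
      q₁ * (ρ n * Sn ^ dA) := by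
    refine (hc₁ P n).trans ?_
    rw [hTP]
    have h2 : (1 + Sn) ^ dA ≤ (2*Sn) ^ dA := by
      apply pow_le_pow_left₀ (by linarith) (by linarith)
    calc c₁ * ρ n * (1 + Sn) ^ dA ≤ c₁ * ρ n * (2*Sn) ^ dA := by
          apply mul_le_mul_of_nonneg_left h2 (mul_nonneg hc₁pos.le (hρpos n).le)
      _ = q₁ * (ρ n * Sn ^ dA) := by rw [hq₁, mul_pow]; ring
  have bound2 : ∀ k ∈ F.erase lam, v (PowerSeries.coeff (R := K) k Y) ≤
      (c₂ * 2 ^ dB) * (ρ n * S'n ^ dB) := by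
    intro k hk
    rw [Finset.mem_erase, hF, Finset.mem_filter, Finset.mem_range] at hk
    have hTk : ∑ i ∈ range (k+1), v (PowerSeries.coeff (R := K) i X) ≤ S'n := by
      rw [hS'n]
      apply Finset.sum_le_sum_of_subset_of_nonneg
      · intro i hi
        simp only [Finset.mem_range] at hi
        simp only [Finset.mem_filter, Finset.mem_range]
        omega
      · intro i _ _
        exact v.nonneg _
    have hTknn : 0 ≤ ∑ i ∈ range (k+1), v (PowerSeries.coeff (R := K) i X) :=
      Finset.sum_nonneg fun i _ => v.nonneg _
    rw [hYdef]
    refine (hc₂ X k).trans ?_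
    have h2 : (1 + ∑ i ∈ range (k+1), v (PowerSeries.coeff (R := K) i X)) ^ dB ≤ (2 * S'n) ^ dB := by
      apply pow_le_pow_left₀ (by positivity) (by linarith)
    calc c₂ * ρ k * (1 + ∑ i ∈ range (k+1), v (PowerSeries.coeff (R := K) i X)) ^ dB
        ≤ c₂ * ρ n * (2 * S'n) ^ dB := by
          apply mul_le_mul (mul_le_mul_of_nonneg_left (hρmono (by omega)) hc₂pos.le) h2
            (pow_nonneg (by linarith) _) (mul_nonneg hc₂pos.le (hρpos n).le)
      _ = (c₂ * 2 ^ dB) * (ρ n * S'n ^ dB) := by rw [mul_pow]; ring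
  -- geometric bound
  have hgsum : ∑ k ∈ F.erase lam, v (PowerSeries.coeff (R := K) (n - k) X) =
      ∑ j ∈ (F.erase lam).image (fun k => n - k), v (PowerSeries.coeff (R := K) j X) := by
    rw [Finset.sum_image]
    intro x hx y hy hxy
    rw [Finset.mem_coe] at hx hy
    simp only at hxy
    rw [Finset.mem_erase, hF, Finset.mem_filter, Finset.mem_range] at hx hy
    omega
  have hgbound : ∑ j ∈ (F.erase lam).image (fun k => n - k),
      v (PowerSeries.coeff (R := K) j X) ≤ 2 * v (PowerSeries.coeff (R := K) (n - lam - 1) X) := by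
    apply fgs_geom (fun j => v (PowerSeries.coeff (R := K) j X)) (fun j => v.nonneg _) N₀ hgeom
      (n - lam - 1)
    intro j hj
    simp only [Finset.mem_image] at hj
    obtain ⟨k, hk, rfl⟩ := hj
    rw [Finset.mem_erase, hF, Finset.mem_filter, Finset.mem_range] at hk
    omega
  -- final combination
  have hfinal : vY * v (PowerSeries.coeff (R := K) (n - lam) X) ≤
      q₁ * (ρ n * Sn ^ dA) + (c₂ * 2 ^ dB) * (ρ n * S'n ^ dB) *
        (2 * v (PowerSeries.coeff (R := K) (n - lam - 1) X)) := by
    have h1 : vY * v (PowerSeries.coeff (R := K) (n - lam) X) =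
        v (PowerSeries.coeff (R := K) lam Y * PowerSeries.coeff (R := K) (n - lam) X) := (v.map_mul _ _).symm
    rw [h1, hmain, v.map_neg]
    refine (v.add_le _ _).trans ?_
    have h2 : v (∑ k ∈ F.erase lam, PowerSeries.coeff (R := K) k Y * PowerSeries.coeff (R := K) (n - k) X) ≤
        (c₂ * 2 ^ dB) * (ρ n * S'n ^ dB) * (2 * v (PowerSeries.coeff (R := K) (n - lam - 1) X)) := by
      refine (v.sum_le _ _).trans ?_
      have h3 : ∀ k ∈ F.erase lam,
          v (PowerSeries.coeff (R := K) k Y * PowerSeries.coeff (R := K) (n - k) X) ≤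
          ((c₂ * 2 ^ dB) * (ρ n * S'n ^ dB)) * v (PowerSeries.coeff (R := K) (n - k) X) := by
        intro k hk
        rw [v.map_mul]
        exact mul_le_mul_of_nonneg_right (bound2 k hk) (v.nonneg _)
      refine (Finset.sum_le_sum h3).trans ?_
      rw [← Finset.mul_sum]
      apply mul_le_mul_of_nonneg_left _
        (mul_nonneg (by positivity) (mul_nonneg (hρpos n).le (by positivity)))
      rw [hgsum]
      exact hgbound
    exact add_le_add bound1 h2
  -- contradiction
  set xv := v (PowerSeries.coeff (R := K) (n - lam) X) with hxv
  set xw := v (PowerSeries.coeff (R := K) (n - lam - 1) X) with hxw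
  have e1 : q₁ * (ρ n * Sn ^ dA) ≤ q₁ * (vY / (4*q₁) * xv) :=
    mul_le_mul_of_nonneg_left hb1 hq₁pos.le
  have e2 : (c₂ * 2 ^ dB) * (ρ n * S'n ^ dB) * (2 * xw) =
      q₂ * (ρ n * xw * S'n ^ dB) := by rw [hq₂]; ring
  have e2' : q₂ * (ρ n * xw * S'n ^ dB) ≤ q₂ * (vY / (4*q₂) * xv) :=
    mul_le_mul_of_nonneg_left hb2 hq₂pos.le
  have heq1 : q₁ * (vY / (4*q₁) * xv) = vY/4 * xv := by
    field_simp
  have heq2 : q₂ * (vY / (4*q₂) * xv) = vY/4 * xv := by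
    field_simp
  have hlt : 0 < vY/2 * xv := mul_pos (by linarith) hXpos
  linarith [hfinal, e1, e2, e2', heq1, heq2, hlt]
end

section
/- The power series X = Σ_{n≥0} 2^{n!}·z^n ∈ ℂ[[z]] is transcendental over the ring R of power series in ℂ[[z]] exhibiting exponential growth: the only polynomial A(t) ∈ R[t] with A(X) = 0 is the zero polynomial. -/
namespace FGS

noncomputable def Xs : PowerSeries ℂ := PowerSeries.mk fun n => (2 : ℂ) ^ n.factorial

lemma coeff_Xs (n : ℕ) : PowerSeries.coeff n Xs = 2 ^ n.factorial := by
  simp [Xs]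

lemma norm_two_pow (k : ℕ) : ‖(2 : ℂ) ^ k‖ = (2 : ℝ) ^ k := by
  rw [norm_pow]
  norm_num

/-- Uniform exponential growth bound over all coefficients of a polynomial. -/
lemma uniform_bound (A : Polynomial (PowerSeries ℂ))
    (hg : ∀ j, ExponentialGrowthC (A.coeff j)) :
    ∃ M R : ℝ, 1 ≤ M ∧ 1 ≤ R ∧
      ∀ j q : ℕ, ‖PowerSeries.coeff q (A.coeff j)‖ ≤ M * R ^ q := by
  classical
  choose Mf rf hMf hrf hb using hg
  set d := A.natDegree with hd
  set B : ℝ := 1 + ∑ j ∈ Finset.range (d + 1), (Mf j + rf j) with hB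
  have hnn : ∀ j ∈ Finset.range (d + 1), (0:ℝ) ≤ Mf j + rf j := by
    intro j _
    have := (hMf j).le
    have := (hrf j).le
    linarith
  have hB1 : (1:ℝ) ≤ B := by
    have := Finset.sum_nonneg hnn
    simp only [hB]
    linarith
  have hle : ∀ j ≤ d, Mf j ≤ B ∧ rf j ≤ B := by
    intro j hj
    have hmem : j ∈ Finset.range (d + 1) := Finset.mem_range.mpr (by omega)
    have h1 : Mf j + rf j ≤ ∑ i ∈ Finset.range (d + 1), (Mf i + rf i) :=
      Finset.single_le_sum hnn hmem
    have := (hMf j).le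
    have := (hrf j).le
    constructor <;> simp only [hB] <;> linarith
  refine ⟨B, B, hB1, hB1, fun j q => ?_⟩
  by_cases hj : j ≤ d
  · obtain ⟨h1, h2⟩ := hle j hj
    calc ‖PowerSeries.coeff q (A.coeff j)‖ ≤ Mf j * rf j ^ q := hb j q
      _ ≤ B * B ^ q := by
          apply mul_le_mul h1 (pow_le_pow_left₀ (hrf j).le h2 q)
            (pow_nonneg (hrf j).le q) (by linarith)
  · have : A.coeff j = 0 := by
      apply Polynomial.coeff_eq_zero_of_natDegree_lt
      omega
    rw [this]
    simp only [map_zero, norm_zero]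
    positivity

/-- Coefficient bound for powers. -/
lemma coeff_pow_bound (Y : PowerSeries ℂ) (C : ℝ) (hC : 1 ≤ C)
    (hY : ∀ q : ℕ, ‖PowerSeries.coeff q Y‖ ≤ C) :
    ∀ (j q : ℕ), ‖PowerSeries.coeff q (Y ^ j)‖ ≤ ((q:ℝ) + 1) ^ j * C ^ j := by
  intro j
  induction j with
  | zero =>
    intro q
    simp only [pow_zero, one_mul]
    rw [PowerSeries.coeff_one]
    split <;> simp
  | succ j ih =>
    intro q
    rw [pow_succ, PowerSeries.coeff_mul]
    have hbound : ∀ p ∈ Finset.HasAntidiagonal.antidiagonal q,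
        ‖PowerSeries.coeff p.1 (Y ^ j) * PowerSeries.coeff p.2 Y‖ ≤
          ((q:ℝ) + 1) ^ j * C ^ j * C := by
      intro p hp
      have hp1 : p.1 ≤ q := by
        have := Finset.HasAntidiagonal.mem_antidiagonal.mp hp
        omega
      rw [norm_mul]
      have h1 : ‖PowerSeries.coeff p.1 (Y ^ j)‖ ≤ ((q:ℝ) + 1) ^ j * C ^ j := by
        refine (ih p.1).trans ?_
        apply mul_le_mul_of_nonneg_right _ (pow_nonneg (by linarith) j)
        apply pow_le_pow_left₀ (by positivity)
        exact_mod_cast by exact_mod_cast (by exact_mod_cast Nat.add_le_add_right hp1 1 : (p.1 + 1 ≤ q + 1))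
      exact mul_le_mul h1 (hY p.2) (norm_nonneg _) (by positivity)
    calc ‖∑ p ∈ Finset.HasAntidiagonal.antidiagonal q,
            PowerSeries.coeff p.1 (Y ^ j) * PowerSeries.coeff p.2 Y‖
        ≤ ∑ p ∈ Finset.HasAntidiagonal.antidiagonal q, ‖PowerSeries.coeff p.1 (Y ^ j) *
            PowerSeries.coeff p.2 Y‖ := norm_sum_le _ _
      _ ≤ ∑ _p ∈ Finset.HasAntidiagonal.antidiagonal q, ((q:ℝ) + 1) ^ j * C ^ j * C :=
          Finset.sum_le_sum hbound
      _ = ((q:ℝ) + 1) * (((q:ℝ) + 1) ^ j * C ^ j * C) := by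
          rw [Finset.sum_const, Finset.Nat.card_antidiagonal]
          push_cast
          ring
      _ = ((q:ℝ) + 1) ^ (j + 1) * C ^ (j + 1) := by ring

/-- Coefficient bound for polynomial evaluation. -/
lemma coeff_eval_bound (A : Polynomial (PowerSeries ℂ)) (M R : ℝ) (hM : 1 ≤ M) (hR : 1 ≤ R)
    (hA : ∀ j q : ℕ, ‖PowerSeries.coeff q (A.coeff j)‖ ≤ M * R ^ q)
    (Y : PowerSeries ℂ) (C : ℝ) (hC : 1 ≤ C) (hY : ∀ q : ℕ, ‖PowerSeries.coeff q Y‖ ≤ C)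
    (n : ℕ) :
    ‖PowerSeries.coeff n (A.eval Y)‖ ≤
      ((A.natDegree : ℝ) + 1) * M * R ^ n * ((n:ℝ) + 1) ^ (A.natDegree + 1) * C ^ A.natDegree := by
  set d := A.natDegree with hd
  rw [Polynomial.eval_eq_sum_range, map_sum]
  have hterm : ∀ j ∈ Finset.range (d + 1),
      ‖PowerSeries.coeff n (A.coeff j * Y ^ j)‖ ≤
        M * R ^ n * ((n:ℝ) + 1) ^ (d + 1) * C ^ d := by
    intro j hj
    have hjd : j ≤ d := by
      have := Finset.mem_range.mp hj; omega
    rw [PowerSeries.coeff_mul]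
    have hb : ∀ p ∈ Finset.HasAntidiagonal.antidiagonal n,
        ‖PowerSeries.coeff p.1 (A.coeff j) * PowerSeries.coeff p.2 (Y ^ j)‖ ≤
          M * R ^ n * ((n:ℝ) + 1) ^ j * C ^ j := by
      intro p hp
      have hpm := Finset.HasAntidiagonal.mem_antidiagonal.mp hp
      have hp1 : p.1 ≤ n := by omega
      have hp2 : p.2 ≤ n := by omega
      rw [norm_mul]
      have h1 : ‖PowerSeries.coeff p.1 (A.coeff j)‖ ≤ M * R ^ n := by
        refine (hA j p.1).trans ?_
        apply mul_le_mul_of_nonneg_left _ (by linarith)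
        exact pow_le_pow_right₀ hR hp1
      have h2 : ‖PowerSeries.coeff p.2 (Y ^ j)‖ ≤ ((n:ℝ) + 1) ^ j * C ^ j := by
        refine (coeff_pow_bound Y C hC hY j p.2).trans ?_
        apply mul_le_mul_of_nonneg_right _ (pow_nonneg (by linarith) j)
        apply pow_le_pow_left₀ (by positivity)
        have : (p.2 : ℝ) ≤ (n : ℝ) := Nat.cast_le.mpr hp2
        push_cast
        linarith
      calc ‖PowerSeries.coeff p.1 (A.coeff j)‖ * ‖PowerSeries.coeff p.2 (Y ^ j)‖
          ≤ (M * R ^ n) * (((n:ℝ) + 1) ^ j * C ^ j) :=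
            mul_le_mul h1 h2 (norm_nonneg _) (by positivity)
        _ = M * R ^ n * ((n:ℝ) + 1) ^ j * C ^ j := by ring
    calc ‖∑ p ∈ Finset.HasAntidiagonal.antidiagonal n, PowerSeries.coeff p.1 (A.coeff j) *
            PowerSeries.coeff p.2 (Y ^ j)‖
        ≤ ∑ p ∈ Finset.HasAntidiagonal.antidiagonal n, ‖PowerSeries.coeff p.1 (A.coeff j) *
            PowerSeries.coeff p.2 (Y ^ j)‖ := norm_sum_le _ _
      _ ≤ ∑ _p ∈ Finset.HasAntidiagonal.antidiagonal n, M * R ^ n * ((n:ℝ) + 1) ^ j * C ^ j :=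
          Finset.sum_le_sum hb
      _ = ((n:ℝ) + 1) * (M * R ^ n * ((n:ℝ) + 1) ^ j * C ^ j) := by
          rw [Finset.sum_const, Finset.Nat.card_antidiagonal]
          push_cast
          ring
      _ = M * R ^ n * ((n:ℝ) + 1) ^ (j + 1) * C ^ j := by ring
      _ ≤ M * R ^ n * ((n:ℝ) + 1) ^ (d + 1) * C ^ d := by
          apply mul_le_mul
          · apply mul_le_mul_of_nonneg_left _ (by positivity)
            exact pow_le_pow_right₀ (by push_cast; linarith) (by omega)
          · exact pow_le_pow_right₀ hC hjd
          · positivity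
          · positivity
  calc ‖∑ j ∈ Finset.range (d + 1), PowerSeries.coeff n (A.coeff j * Y ^ j)‖
      ≤ ∑ j ∈ Finset.range (d + 1), ‖PowerSeries.coeff n (A.coeff j * Y ^ j)‖ :=
        norm_sum_le _ _
    _ ≤ ∑ _j ∈ Finset.range (d + 1), M * R ^ n * ((n:ℝ) + 1) ^ (d + 1) * C ^ d :=
        Finset.sum_le_sum hterm
    _ = ((d:ℝ) + 1) * (M * R ^ n * ((n:ℝ) + 1) ^ (d + 1) * C ^ d) := by
        rw [Finset.sum_const, Finset.card_range]
        push_cast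
        ring
    _ = ((d:ℝ) + 1) * M * R ^ n * ((n:ℝ) + 1) ^ (d + 1) * C ^ d := by ring

/-- Arithmetic gap lemma. -/
lemma nat_gap (s t N : ℕ) (h : s + t + 3 ≤ N) : t + s * N + 1 ≤ (N - 1).factorial := by
  obtain ⟨m, rfl⟩ := Nat.exists_eq_add_of_le h
  have h1 : (s + t + 3 + m) - 1 = s + t + 2 + m := by omega
  rw [h1]
  have h2 : (s + t + 2 + m).factorial = (s + t + 2 + m) * (s + t + 1 + m).factorial := by
    have : s + t + 2 + m = (s + t + 1 + m) + 1 := by omega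
    rw [this, Nat.factorial_succ]
  have h3 : s + t + 1 + m ≤ (s + t + 1 + m).factorial := Nat.self_le_factorial _
  have h4 : (s + t + 2 + m) * (s + t + 1 + m) ≤ (s + t + 2 + m) * (s + t + 1 + m).factorial :=
    Nat.mul_le_mul_left _ h3
  have h5 : t + s * (s + t + 3 + m) + 1 ≤ (s + t + 2 + m) * (s + t + 1 + m) := by nlinarith
  omega

lemma growth_mul_nat (U : PowerSeries ℂ) (hU : ExponentialGrowthC U) (m : ℕ) :
    ExponentialGrowthC (U * ((m : PowerSeries ℂ) + 1)) := by
  obtain ⟨M, r, hM, hr, hb⟩ := hU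
  refine ⟨M * ((m:ℝ) + 1), r, by positivity, hr, fun n => ?_⟩
  have hcast : ((m : PowerSeries ℂ) + 1) = PowerSeries.C ((m : ℂ) + 1) := by
    rw [map_add, map_one, map_natCast]
  rw [hcast, PowerSeries.coeff_mul_C, norm_mul]
  have h2 : ‖((m:ℂ) + 1)‖ = (m:ℝ) + 1 := by
    rw [show ((m:ℂ) + 1) = ((m + 1 : ℕ) : ℂ) by push_cast; ring, Complex.norm_natCast]
    push_cast
    ring
  rw [h2]
  calc ‖PowerSeries.coeff n U‖ * ((m:ℝ) + 1) ≤ (M * r ^ n) * ((m:ℝ) + 1) := by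
        apply mul_le_mul_of_nonneg_right (hb n) (by positivity)
    _ = M * ((m:ℝ) + 1) * r ^ n := by ring

/-- Key lemma: if `A(X) = 0` then `A'(X) = 0`. -/
lemma key (A : Polynomial (PowerSeries ℂ)) (hg : ∀ j, ExponentialGrowthC (A.coeff j))
    (h0 : A.eval Xs = 0) : A.derivative.eval Xs = 0 := by
  classical
  by_contra hD
  have hex : ∃ k, PowerSeries.coeff k (A.derivative.eval Xs) ≠ 0 := by
    by_contra hc
    push_neg at hc
    exact hD (PowerSeries.ext hc)
  set k0 := Nat.find hex with hk0
  have hc0 : PowerSeries.coeff k0 (A.derivative.eval Xs) ≠ 0 := Nat.find_spec hex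
  have hmin : ∀ k, k < k0 → PowerSeries.coeff k (A.derivative.eval Xs) = 0 := fun k hk =>
    not_not.mp (Nat.find_min hex hk)
  obtain ⟨M, R, hM, hR, hMR⟩ := uniform_bound A hg
  set d := A.natDegree with hd
  set c := PowerSeries.coeff k0 (A.derivative.eval Xs) with hc
  have hcpos : 0 < ‖c‖ := norm_pos_iff.mpr hc0
  set S : ℝ := 2 ^ (d + 1) * R with hS
  have h2p : (1:ℝ) ≤ 2 ^ (d + 1) := one_le_pow₀ one_le_two
  have hS1 : (1:ℝ) ≤ S := by nlinarith
  obtain ⟨s, hs⟩ : ∃ s : ℕ, S ≤ 2 ^ s :=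
    ⟨_, (pow_unbounded_of_one_lt S one_lt_two).choose_spec.le⟩
  obtain ⟨t, ht⟩ : ∃ t : ℕ, ((d:ℝ) + 1) * M * S ^ k0 ≤ ‖c‖ * 2 ^ t := by
    obtain ⟨t, ht⟩ := pow_unbounded_of_one_lt (((d:ℝ) + 1) * M * S ^ k0 / ‖c‖) one_lt_two
    refine ⟨t, ?_⟩
    rw [div_lt_iff₀ hcpos] at ht
    nlinarith
  set N := d + s + t + k0 + 5 with hN
  set n := N + k0 with hn
  set Y : PowerSeries ℂ := ((PowerSeries.trunc N Xs : Polynomial ℂ) : PowerSeries ℂ) with hYdef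
  set T : PowerSeries ℂ := Xs - Y with hT
  have hYcoeff : ∀ m : ℕ, PowerSeries.coeff m Y =
      if m < N then (2:ℂ) ^ m.factorial else 0 := by
    intro m
    rw [hYdef, Polynomial.coeff_coe, PowerSeries.coeff_trunc]
    simp only [coeff_Xs]
  have hT0 : ∀ m, m < N → PowerSeries.coeff m T = 0 := by
    intro m hm
    rw [hT, map_sub, hYcoeff, if_pos hm, coeff_Xs, sub_self]
  have hTdvd : (PowerSeries.X : PowerSeries ℂ) ^ N ∣ T := PowerSeries.X_pow_dvd_iff.mpr hT0
  have hTN : PowerSeries.coeff N T = (2:ℂ) ^ N.factorial := by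
    rw [hT, map_sub, hYcoeff, if_neg (lt_irrefl N), coeff_Xs, sub_zero]
  have hDY : ∀ p, p < N →
      PowerSeries.coeff p (A.derivative.eval Y) =
        PowerSeries.coeff p (A.derivative.eval Xs) := by
    intro p hp
    have hdvd : (PowerSeries.X : PowerSeries ℂ) ^ N ∣
        A.derivative.eval Xs - A.derivative.eval Y :=
      dvd_trans hTdvd (Polynomial.sub_dvd_eval_sub Xs Y A.derivative)
    have h1 := (PowerSeries.X_pow_dvd_iff.mp hdvd) p hp
    rw [map_sub, sub_eq_zero] at h1
    exact h1.symm
  obtain ⟨kk, hkk⟩ := A.binomExpansion Y T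
  have hYT : Y + T = Xs := by rw [hT]; ring
  rw [hYT, h0] at hkk
  have hcoeff : PowerSeries.coeff n (A.eval Y) +
      PowerSeries.coeff n (A.derivative.eval Y * T) +
      PowerSeries.coeff n (kk * T ^ 2) = 0 := by
    have h1 := congrArg (PowerSeries.coeff n) hkk
    simp only [map_add, map_zero] at h1
    exact h1.symm
  have hE3 : PowerSeries.coeff n (kk * T ^ 2) = 0 := by
    have h2N : (PowerSeries.X : PowerSeries ℂ) ^ (N + N) ∣ kk * T ^ 2 := by
      apply Dvd.dvd.mul_left _ kk
      rw [pow_add, sq]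
      exact mul_dvd_mul hTdvd hTdvd
    exact PowerSeries.X_pow_dvd_iff.mp h2N n (by omega)
  have hE2 : PowerSeries.coeff n (A.derivative.eval Y * T) = c * (2:ℂ) ^ N.factorial := by
    rw [PowerSeries.coeff_mul]
    rw [Finset.sum_eq_single ((k0, N) : ℕ × ℕ)]
    · rw [hDY k0 (by omega), hTN, ← hc]
    · rintro ⟨p, q⟩ hpq hne
      have hpqe : p + q = n := Finset.HasAntidiagonal.mem_antidiagonal.mp hpq
      by_cases hq : q < N
      · rw [hT0 q hq, mul_zero]
      · have hqN : q ≠ N := by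
          intro he
          apply hne
          have : p = k0 := by omega
          rw [this, he]
        have hp : p < k0 := by omega
        rw [hDY p (by omega), hmin p hp, zero_mul]
    · intro hmem
      exact absurd (Finset.HasAntidiagonal.mem_antidiagonal.mpr (by omega)) hmem
  have hkey : PowerSeries.coeff n (A.eval Y) = -(c * (2:ℂ) ^ N.factorial) := by
    rw [hE2, hE3] at hcoeff
    linear_combination hcoeff
  -- norm bound on coeff n (A.eval Y)
  have hYb : ∀ q : ℕ, ‖PowerSeries.coeff q Y‖ ≤ (2:ℝ) ^ (N - 1).factorial := by
    intro q
    rw [hYcoeff]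
    split
    · rename_i hq
      rw [norm_two_pow]
      exact pow_le_pow_right₀ one_le_two (Nat.factorial_le (by omega))
    · rw [norm_zero]
      positivity
  have hC1 : (1:ℝ) ≤ (2:ℝ) ^ (N - 1).factorial := one_le_pow₀ one_le_two
  have hbound := coeff_eval_bound A M R hM hR hMR Y ((2:ℝ) ^ (N - 1).factorial) hC1 hYb n
  rw [← hd] at hbound
  have hnormY : ‖PowerSeries.coeff n (A.eval Y)‖ = ‖c‖ * (2:ℝ) ^ N.factorial := by
    rw [hkey, norm_neg, norm_mul, norm_two_pow]
  rw [hnormY] at hbound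
  -- now derive the arithmetic contradiction
  have hn2 : ((n:ℝ) + 1) ≤ 2 ^ n := by exact_mod_cast (Nat.lt_two_pow_self (n := n))
  have hstep1 : ((n:ℝ) + 1) ^ (d + 1) ≤ (2 ^ (d + 1) : ℝ) ^ n := by
    calc ((n:ℝ) + 1) ^ (d + 1) ≤ ((2:ℝ) ^ n) ^ (d + 1) :=
          pow_le_pow_left₀ (by positivity) hn2 _
      _ = ((2:ℝ) ^ (d + 1)) ^ n := pow_right_comm 2 n (d + 1)
  have hCd : ((2:ℝ) ^ (N - 1).factorial) ^ d = (2:ℝ) ^ (d * (N - 1).factorial) := by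
    rw [mul_comm, pow_mul]
  have hchain : ‖c‖ * (2:ℝ) ^ N.factorial ≤
      ((d:ℝ) + 1) * M * S ^ n * (2:ℝ) ^ (d * (N - 1).factorial) := by
    calc ‖c‖ * (2:ℝ) ^ N.factorial
        ≤ ((d:ℝ) + 1) * M * R ^ n * ((n:ℝ) + 1) ^ (d + 1) *
            ((2:ℝ) ^ (N - 1).factorial) ^ d := hbound
      _ ≤ ((d:ℝ) + 1) * M * R ^ n * ((2:ℝ) ^ (d + 1)) ^ n *
            ((2:ℝ) ^ (N - 1).factorial) ^ d := by
          have hnn : (0:ℝ) ≤ ((d:ℝ) + 1) * M * R ^ n := by positivity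
          have hC0 : (0:ℝ) ≤ ((2:ℝ) ^ (N - 1).factorial) ^ d := by positivity
          apply mul_le_mul_of_nonneg_right _ hC0
          exact mul_le_mul_of_nonneg_left hstep1 hnn
      _ = ((d:ℝ) + 1) * M * S ^ n * ((2:ℝ) ^ (N - 1).factorial) ^ d := by
          rw [hS, mul_pow]
          ring
      _ = ((d:ℝ) + 1) * M * S ^ n * (2:ℝ) ^ (d * (N - 1).factorial) := by rw [hCd]
  have hchain2 : ‖c‖ * (2:ℝ) ^ N.factorial ≤
      ‖c‖ * (2:ℝ) ^ (t + s * N + d * (N - 1).factorial) := by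
    have hSn : S ^ n = S ^ k0 * S ^ N := by rw [hn]; rw [pow_add]; ring
    have hSN : S ^ N ≤ ((2:ℝ) ^ s) ^ N := pow_le_pow_left₀ (by linarith) hs N
    have h1 : ((d:ℝ) + 1) * M * S ^ n ≤ ‖c‖ * 2 ^ t * ((2:ℝ) ^ s) ^ N := by
      rw [hSn]
      calc ((d:ℝ) + 1) * M * (S ^ k0 * S ^ N)
          = (((d:ℝ) + 1) * M * S ^ k0) * S ^ N := by ring
        _ ≤ (‖c‖ * 2 ^ t) * ((2:ℝ) ^ s) ^ N := by
            apply mul_le_mul ht hSN (by positivity)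
            positivity
    calc ‖c‖ * (2:ℝ) ^ N.factorial
        ≤ ((d:ℝ) + 1) * M * S ^ n * (2:ℝ) ^ (d * (N - 1).factorial) := hchain
      _ ≤ ‖c‖ * 2 ^ t * ((2:ℝ) ^ s) ^ N * (2:ℝ) ^ (d * (N - 1).factorial) := by
          apply mul_le_mul_of_nonneg_right h1 (by positivity)
      _ = ‖c‖ * ((2:ℝ) ^ t * (2:ℝ) ^ (s * N) * (2:ℝ) ^ (d * (N - 1).factorial)) := by
          rw [← pow_mul]
          ring
      _ = ‖c‖ * (2:ℝ) ^ (t + s * N + d * (N - 1).factorial) := by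
          rw [pow_add, pow_add]
  have hexp : N.factorial ≤ t + s * N + d * (N - 1).factorial := by
    have h2 : (2:ℝ) ^ N.factorial ≤ (2:ℝ) ^ (t + s * N + d * (N - 1).factorial) :=
      le_of_mul_le_mul_left hchain2 hcpos
    exact (pow_le_pow_iff_right₀ one_lt_two).mp h2
  have hNfac : N * (N - 1).factorial = N.factorial := Nat.mul_factorial_pred (by omega)
  have hd1 : (d + 1) * (N - 1).factorial ≤ N * (N - 1).factorial :=
    Nat.mul_le_mul_right _ (by omega)
  have hgap := nat_gap s t N (by omega)
  -- conclude
  have hF : (N - 1).factorial ≤ t + s * N := by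
    have h6 : (d + 1) * (N - 1).factorial ≤ t + s * N + d * (N - 1).factorial := by
      refine le_trans hd1 ?_
      rw [hNfac]
      exact hexp
    have h7 : d * (N - 1).factorial + (N - 1).factorial ≤
        d * (N - 1).factorial + (t + s * N) := by
      calc d * (N - 1).factorial + (N - 1).factorial = (d + 1) * (N - 1).factorial := by ring
        _ ≤ t + s * N + d * (N - 1).factorial := h6
        _ = d * (N - 1).factorial + (t + s * N) := by ring
    exact Nat.le_of_add_le_add_left h7
  obtain ⟨G, hG⟩ : ∃ G, G = s * N := ⟨_, rfl⟩
  rw [← hG] at hF hgap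
  omega

lemma main_aux : ∀ (n : ℕ) (A : Polynomial (PowerSeries ℂ)), A.natDegree ≤ n →
    (∀ j, ExponentialGrowthC (A.coeff j)) → A.eval Xs = 0 → A = 0 := by
  intro n
  induction n with
  | zero =>
    intro A hdeg hg h0
    have hC : A = Polynomial.C (A.coeff 0) := Polynomial.eq_C_of_natDegree_le_zero hdeg
    rw [hC, Polynomial.eval_C] at h0
    rw [hC, h0, map_zero]
  | succ n ih =>
    intro A hdeg hg h0
    have hD := key A hg h0
    have hg' : ∀ j, ExponentialGrowthC (A.derivative.coeff j) := by
      intro j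
      rw [Polynomial.coeff_derivative]
      exact growth_mul_nat (A.coeff (j + 1)) (hg (j + 1)) j
    have hdeg' : A.derivative.natDegree ≤ n :=
      le_trans (Polynomial.natDegree_derivative_le A) (by omega)
    have hzero := ih A.derivative hdeg' hg' hD
    have hco : ∀ j : ℕ, A.coeff (j + 1) = 0 := by
      intro j
      have h1 : A.derivative.coeff j = 0 := by rw [hzero, Polynomial.coeff_zero]
      rw [Polynomial.coeff_derivative] at h1
      have h2 : ((j : PowerSeries ℂ) + 1) ≠ 0 := by
        intro hc
        have h3 : ((j : ℂ) + 1) = 0 := by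
          have h4 := congrArg (PowerSeries.constantCoeff) hc
          simpa using h4
        have h5 : ((j + 1 : ℕ) : ℂ) = 0 := by push_cast; linear_combination h3
        exact Nat.cast_ne_zero.mpr (Nat.succ_ne_zero j) h5
      rcases mul_eq_zero.mp h1 with h | h
      · exact h
      · exact absurd h h2
    have hCA : A = Polynomial.C (A.coeff 0) := by
      ext k
      cases k with
      | zero => simp
      | succ k => simp [hco k, Polynomial.coeff_C]
    rw [hCA, Polynomial.eval_C] at h0
    rw [hCA, h0, map_zero]

end FGS

theorem fast_growing_series_stmt15 :
    ∀ A : Polynomial (PowerSeries ℂ), (∀ j, ExponentialGrowthC (A.coeff j)) →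
      Polynomial.eval (PowerSeries.mk fun n => (2 : ℂ) ^ n.factorial) A = 0 → A = 0 := by
  intro A hg h0
  exact FGS.main_aux A.natDegree A le_rfl hg h0
end

section
/- The power series L(z) = Σ_{n≥0} z^{2^n} ∈ ℂ[[z]] is transcendental over the polynomial ring ℂ[z]: there is no nonzero polynomial A(t) ∈ ℂ[z][t] with A(L) = 0. -/
open Polynomial PowerSeries Finset

/-- The substitution `z ↦ z ^ 2` on formal power series over `ℂ`, as a ring homomorphism. -/
noncomputable def sigPS : PowerSeries ℂ →+* PowerSeries ℂ where
  toFun f := PowerSeries.mk fun k => if 2 ∣ k then PowerSeries.coeff (R := ℂ) (k / 2) f else 0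
  map_one' := by
    ext k
    simp only [PowerSeries.coeff_mk, PowerSeries.coeff_one]
    by_cases h : 2 ∣ k
    · obtain ⟨m, rfl⟩ := h
      rw [if_pos ⟨m, rfl⟩]
      have : 2 * m / 2 = m := by omega
      rw [this]
      by_cases hm : m = 0
      · simp [hm]
      · rw [if_neg hm, if_neg (by omega)]
    · rw [if_neg h, if_neg (by rintro rfl; exact h ⟨0, rfl⟩)]
  map_mul' f g := by
    ext k
    simp only [PowerSeries.coeff_mk, PowerSeries.coeff_mul]
    by_cases h : 2 ∣ k
    · obtain ⟨m, rfl⟩ := h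
      rw [if_pos ⟨m, rfl⟩]
      have h2m : 2 * m / 2 = m := by omega
      rw [h2m]
      set t : ℕ × ℕ → ℂ := fun p =>
        (if 2 ∣ p.1 then PowerSeries.coeff (R := ℂ) (p.1 / 2) f else 0) *
          (if 2 ∣ p.2 then PowerSeries.coeff (R := ℂ) (p.2 / 2) g else 0) with ht
      have hinj : ∀ p ∈ Finset.HasAntidiagonal.antidiagonal m, ∀ q ∈ Finset.HasAntidiagonal.antidiagonal m,
          (fun p : ℕ × ℕ => (2 * p.1, 2 * p.2)) p = (fun p : ℕ × ℕ => (2 * p.1, 2 * p.2)) q →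
            p = q := by
        intro p _ q _ hpq
        simp only [Prod.mk.injEq] at hpq
        exact Prod.ext (by omega) (by omega)
      have hsub : (Finset.HasAntidiagonal.antidiagonal m).image (fun p : ℕ × ℕ => (2 * p.1, 2 * p.2)) ⊆
          Finset.HasAntidiagonal.antidiagonal (2 * m) := by
        intro p hp
        simp only [Finset.mem_image, Finset.HasAntidiagonal.mem_antidiagonal] at hp ⊢
        obtain ⟨q, hq, rfl⟩ := hp
        omega
      have hvanish : ∀ p ∈ Finset.HasAntidiagonal.antidiagonal (2 * m),
          p ∉ (Finset.HasAntidiagonal.antidiagonal m).image (fun p : ℕ × ℕ => (2 * p.1, 2 * p.2)) → t p = 0 := by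
        intro p hp hnot
        simp only [Finset.HasAntidiagonal.mem_antidiagonal] at hp
        by_cases h1 : 2 ∣ p.1
        · by_cases h2 : 2 ∣ p.2
          · exfalso
            apply hnot
            simp only [Finset.mem_image, Finset.HasAntidiagonal.mem_antidiagonal]
            exact ⟨(p.1 / 2, p.2 / 2), by omega, by simp only [Prod.ext_iff]; constructor <;> omega⟩
          · simp [ht, h2]
        · simp [ht, h1]
      calc ∑ p ∈ Finset.HasAntidiagonal.antidiagonal m, PowerSeries.coeff (R := ℂ) p.1 f * PowerSeries.coeff (R := ℂ) p.2 g
          = ∑ p ∈ Finset.HasAntidiagonal.antidiagonal m, t ((2 * p.1, 2 * p.2)) := by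
            apply Finset.sum_congr rfl
            intro p _
            simp only [ht]
            rw [if_pos ⟨p.1, rfl⟩, if_pos ⟨p.2, rfl⟩,
              (by omega : 2 * p.1 / 2 = p.1), (by omega : 2 * p.2 / 2 = p.2)]
        _ = ∑ p ∈ (Finset.HasAntidiagonal.antidiagonal m).image (fun p : ℕ × ℕ => (2 * p.1, 2 * p.2)), t p :=
            (Finset.sum_image hinj).symm
        _ = ∑ p ∈ Finset.HasAntidiagonal.antidiagonal (2 * m), t p := Finset.sum_subset hsub hvanish
    · rw [if_neg h]
      symm
      apply Finset.sum_eq_zero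
      intro p hp
      simp only [Finset.HasAntidiagonal.mem_antidiagonal] at hp
      by_cases h1 : 2 ∣ p.1
      · have h2 : ¬ 2 ∣ p.2 := by omega
        rw [if_neg h2, mul_zero]
      · rw [if_neg h1, zero_mul]
  map_zero' := by
    ext k
    simp
  map_add' f g := by
    ext k
    simp only [PowerSeries.coeff_mk, map_add]
    split_ifs <;> simp

lemma coeff_sigPS (f : PowerSeries ℂ) (k : ℕ) :
    PowerSeries.coeff (R := ℂ) k (sigPS f) = if 2 ∣ k then PowerSeries.coeff (R := ℂ) (k / 2) f else 0 := by
  simp only [sigPS, RingHom.coe_mk, MonoidHom.coe_mk, OneHom.coe_mk, PowerSeries.coeff_mk]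

lemma sigPS_injective : Function.Injective sigPS := by
  intro f g hfg
  ext k
  have := congrArg (PowerSeries.coeff (R := ℂ) (2 * k)) hfg
  rwa [coeff_sigPS, coeff_sigPS, if_pos ⟨k, rfl⟩, if_pos ⟨k, rfl⟩,
    (by omega : 2 * k / 2 = k)] at this

/-- substitution `z ↦ z^2` on polynomials -/
noncomputable def sigR : Polynomial ℂ →+* Polynomial ℂ :=
  Polynomial.eval₂RingHom Polynomial.C (Polynomial.X ^ 2)

lemma sigR_apply (r : Polynomial ℂ) : sigR r = r.comp (Polynomial.X ^ 2) := rfl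

lemma sigPS_coe (r : Polynomial ℂ) :
    sigPS (r : PowerSeries ℂ) = ((sigR r : Polynomial ℂ) : PowerSeries ℂ) := by
  have : sigPS.comp (Polynomial.coeToPowerSeries.ringHom (R := ℂ)) =
      (Polynomial.coeToPowerSeries.ringHom (R := ℂ)).comp sigR := by
    apply Polynomial.ringHom_ext
    · intro a
      simp only [RingHom.comp_apply, Polynomial.coeToPowerSeries.ringHom_apply]
      rw [sigR, Polynomial.coe_eval₂RingHom, Polynomial.eval₂_C, Polynomial.coe_C]
      ext k
      rw [coeff_sigPS, show (PowerSeries.coeff (R := ℂ) k) ((PowerSeries.C (R := ℂ)) a) =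
        if k = 0 then a else 0 from PowerSeries.coeff_C k a]
      by_cases hk : k = 0
      · subst hk
        simp
      · rw [if_neg hk]
        by_cases h2 : 2 ∣ k
        · rw [if_pos h2, PowerSeries.coeff_C, if_neg (by omega)]
        · rw [if_neg h2]
    · simp only [RingHom.comp_apply, Polynomial.coeToPowerSeries.ringHom_apply]
      rw [sigR, Polynomial.coe_eval₂RingHom, Polynomial.eval₂_X, Polynomial.coe_X,
        Polynomial.coe_pow, Polynomial.coe_X]
      ext k
      rw [coeff_sigPS, show (PowerSeries.coeff (R := ℂ) k) ((PowerSeries.X : ℂ⟦X⟧) ^ 2) =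
        if k = 2 then 1 else 0 from PowerSeries.coeff_X_pow k 2]
      by_cases hk : k = 2
      · subst hk
        rw [if_pos rfl, if_pos ⟨1, rfl⟩, PowerSeries.coeff_X]
        norm_num
      · rw [if_neg hk]
        by_cases h2 : 2 ∣ k
        · rw [if_pos h2, PowerSeries.coeff_X, if_neg (by omega)]
        · rw [if_neg h2]
  exact RingHom.congr_fun this r

lemma sigR_injective : Function.Injective sigR := by
  intro r s hrs
  have h1 : sigPS (r : PowerSeries ℂ) = sigPS (s : PowerSeries ℂ) := by
    rw [sigPS_coe, sigPS_coe, hrs]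
  have h2 := sigPS_injective h1
  exact_mod_cast h2

lemma natDegree_sigR (r : Polynomial ℂ) : (sigR r).natDegree = 2 * r.natDegree := by
  rw [sigR_apply, Polynomial.natDegree_comp, Polynomial.natDegree_X_pow, Nat.mul_comm]

lemma sigR_ne_zero {r : Polynomial ℂ} (hr : r ≠ 0) : sigR r ≠ 0 := by
  intro h
  exact hr (sigR_injective (by rw [h, map_zero]))

open Classical in
lemma sigPS_L (L : PowerSeries ℂ)
    (hL : L = PowerSeries.mk fun k => if ∃ n : ℕ, k = 2 ^ n then (1 : ℂ) else 0) :
    sigPS L = L - PowerSeries.X := by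
  subst hL
  ext k
  rw [map_sub, coeff_sigPS, PowerSeries.coeff_mk, PowerSeries.coeff_mk, PowerSeries.coeff_X]
  by_cases h2 : 2 ∣ k
  · obtain ⟨m, rfl⟩ := h2
    rw [if_pos ⟨m, rfl⟩, (by omega : 2 * m / 2 = m)]
    by_cases hm : m = 0
    · subst hm
      rw [if_neg (show ¬∃ n : ℕ, 0 = 2 ^ n by
          rintro ⟨n, hn⟩
          have : 0 < 2 ^ n := pow_pos (by norm_num) n
          omega)]
      norm_num
    · have hiff : (∃ n : ℕ, m = 2 ^ n) ↔ (∃ n : ℕ, 2 * m = 2 ^ n) := by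
        constructor
        · rintro ⟨n, rfl⟩
          exact ⟨n + 1, by ring⟩
        · rintro ⟨n, hn⟩
          rcases n with _ | n
          · exfalso
            rw [pow_zero] at hn
            omega
          · refine ⟨n, ?_⟩
            rw [pow_succ] at hn
            omega
      rw [if_neg (by omega : ¬2 * m = 1), sub_zero, if_congr hiff rfl rfl]
  · rw [if_neg h2]
    by_cases hk1 : k = 1
    · subst hk1
      rw [if_pos ⟨0, by norm_num⟩, if_pos rfl]
      ring
    · rw [if_neg (show ¬∃ n : ℕ, k = 2 ^ n by
          rintro ⟨n, rfl⟩
          rcases n with _ | n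
          · simp at hk1
          · exact h2 ⟨2 ^ n, by rw [pow_succ]; ring⟩),
        if_neg hk1]
      ring

open Classical in
theorem fast_growing_series_stmt17
    (L : PowerSeries ℂ)
    (hL : L = PowerSeries.mk fun k => if ∃ n : ℕ, k = 2 ^ n then (1 : ℂ) else 0) :
    ∀ A : Polynomial (Polynomial ℂ),
      Polynomial.eval L
        (A.map (Polynomial.coeToPowerSeries.ringHom : Polynomial ℂ →+* PowerSeries ℂ)) = 0 →
      A = 0 := by
  intro A₀ hA₀eval
  by_contra hA₀
  set ι : Polynomial ℂ →+* PowerSeries ℂ := Polynomial.coeToPowerSeries.ringHom with hι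
  rw [Polynomial.eval_map] at hA₀eval
  have hex : ∃ n : ℕ, ∃ B : Polynomial (Polynomial ℂ),
      B ≠ 0 ∧ Polynomial.eval₂ ι L B = 0 ∧ B.natDegree = n :=
    ⟨A₀.natDegree, A₀, hA₀, hA₀eval, rfl⟩
  set d := Nat.find hex with hd
  obtain ⟨A, hA0, hAL, hAd⟩ := Nat.find_spec hex
  have hmin : ∀ P : Polynomial (Polynomial ℂ), P ≠ 0 → Polynomial.eval₂ ι L P = 0 →
      d ≤ P.natDegree := fun P h1 h2 => Nat.find_min' hex ⟨P, h1, h2, rfl⟩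
  -- d ≥ 1
  have hd1 : 1 ≤ d := by
    by_contra h
    have h0 : A.natDegree = 0 := by omega
    obtain ⟨a, ha⟩ := Polynomial.natDegree_eq_zero.mp h0
    rw [← ha, Polynomial.eval₂_C] at hAL
    have : a = 0 := by
      have := hAL
      rw [hι, Polynomial.coeToPowerSeries.ringHom_apply, Polynomial.coe_eq_zero_iff] at this
      exact this
    exact hA0 (by rw [← ha, this, map_zero])
  set z : Polynomial ℂ := Polynomial.X with hz
  set Xt : Polynomial (Polynomial ℂ) := Polynomial.X with hXt
  set A' : Polynomial (Polynomial ℂ) := A.map sigR with hA'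
  set B : Polynomial (Polynomial ℂ) := A'.comp (Xt - Polynomial.C z) with hB
  -- B annihilates L
  have hBL : Polynomial.eval₂ ι L B = 0 := by
    have hhom : (Polynomial.eval₂RingHom ι L).comp
        ((Polynomial.eval₂RingHom (Polynomial.C : Polynomial ℂ →+* Polynomial (Polynomial ℂ))
            (Xt - Polynomial.C z)).comp (Polynomial.mapRingHom sigR)) =
        sigPS.comp (Polynomial.eval₂RingHom ι L) := by
      apply Polynomial.ringHom_ext
      · intro a
        simp only [RingHom.comp_apply, Polynomial.coe_mapRingHom, Polynomial.map_C,
          Polynomial.coe_eval₂RingHom, Polynomial.eval₂_C]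
        rw [hι, Polynomial.coeToPowerSeries.ringHom_apply,
          Polynomial.coeToPowerSeries.ringHom_apply, sigPS_coe]
      · simp only [RingHom.comp_apply, Polynomial.coe_mapRingHom, Polynomial.map_X,
          Polynomial.coe_eval₂RingHom, Polynomial.eval₂_X]
        have hsub : Polynomial.eval₂ ι L (Xt - Polynomial.C z)
            = Polynomial.eval₂ ι L Xt - Polynomial.eval₂ ι L (Polynomial.C z) := by
          have h := map_sub (Polynomial.eval₂RingHom ι L) Xt (Polynomial.C z)
          simpa only [Polynomial.coe_eval₂RingHom] using h
        rw [hsub, Polynomial.eval₂_X, Polynomial.eval₂_C, sigPS_L L hL,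
          hι, Polynomial.coeToPowerSeries.ringHom_apply, hz, Polynomial.coe_X]
    have := RingHom.congr_fun hhom A
    simp only [RingHom.comp_apply, Polynomial.coe_mapRingHom, Polynomial.coe_eval₂RingHom] at this
    have hcomp : B = Polynomial.eval₂ Polynomial.C (Xt - Polynomial.C z) A' := rfl
    rw [hcomp, hA', this, hAL, map_zero]
  -- coefficient formula for B
  have hA'deg : A'.natDegree ≤ d := le_trans Polynomial.natDegree_map_le (le_of_eq hAd)
  have hBsum : B = ∑ i ∈ Finset.range (d + 1),
      Polynomial.C (sigR (A.coeff i)) * (Xt - Polynomial.C z) ^ i := by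
    have hcomp : B = Polynomial.eval₂ Polynomial.C (Xt - Polynomial.C z) A' := rfl
    rw [hcomp, Polynomial.eval₂_eq_sum_range' _ (by omega : A'.natDegree < d + 1)]
    exact Finset.sum_congr rfl fun i _ => by rw [hA', Polynomial.coeff_map]
  have hpow : ∀ i k : ℕ, ((Xt - Polynomial.C z) ^ i).coeff k
      = (-z) ^ (i - k) * (i.choose k : Polynomial ℂ) := by
    intro i k
    rw [show Xt - Polynomial.C z = Xt + Polynomial.C (-z) by rw [map_neg, sub_eq_add_neg],
      Polynomial.coeff_X_add_C_pow]
  have hcoeffB : ∀ k : ℕ, B.coeff k = ∑ i ∈ Finset.range (d + 1),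
      sigR (A.coeff i) * ((-z) ^ (i - k) * (i.choose k : Polynomial ℂ)) := by
    intro k
    rw [hBsum, Polynomial.finset_sum_coeff]
    exact Finset.sum_congr rfl fun i _ => by rw [Polynomial.coeff_C_mul, hpow]
  set p : Polynomial ℂ := A.coeff d with hp
  set q : Polynomial ℂ := A.coeff (d - 1) with hq
  set D : Polynomial ℂ := ((d : ℕ) : Polynomial ℂ) with hD
  have hcoeffBd : B.coeff d = sigR p := by
    rw [hcoeffB d, Finset.sum_range_succ,
      Finset.sum_eq_zero (fun i hi => by
        rw [Nat.choose_eq_zero_of_lt (Finset.mem_range.mp hi), Nat.cast_zero, mul_zero, mul_zero]),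
      zero_add, Nat.sub_self, pow_zero, Nat.choose_self, Nat.cast_one, mul_one, mul_one, hp]
  have hcoeffBd1 : B.coeff (d - 1) = sigR q + sigR p * (-z * D) := by
    obtain ⟨e, hde⟩ : ∃ e, d = e + 1 := ⟨d - 1, by omega⟩
    rw [hcoeffB, hde]
    rw [Finset.sum_range_succ, Finset.sum_range_succ,
      Finset.sum_eq_zero (fun i hi => by
        rw [Nat.choose_eq_zero_of_lt (by have := Finset.mem_range.mp hi; omega),
          Nat.cast_zero, mul_zero, mul_zero]),
      zero_add]
    have h1 : e + 1 - 1 = e := by omega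
    have h2 : e - (e + 1 - 1) = 0 := by omega
    have h3 : e + 1 - (e + 1 - 1) = 1 := by omega
    rw [h2, h3, pow_zero, pow_one, h1, Nat.choose_self, Nat.cast_one,
      Nat.choose_succ_self_right, hq, hp, hD, hde]
    push_cast
    ring
  -- the elimination polynomial
  set P : Polynomial (Polynomial ℂ) :=
    Polynomial.C (sigR p) * A - Polynomial.C p * B with hP
  have hPL : Polynomial.eval₂ ι L P = 0 := by
    have h := map_sub (Polynomial.eval₂RingHom ι L) (Polynomial.C (sigR p) * A)
      (Polynomial.C p * B)
    rw [map_mul, map_mul] at h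
    simp only [Polynomial.coe_eval₂RingHom, Polynomial.eval₂_C] at h
    rw [hP, h, hAL, hBL, mul_zero, mul_zero, sub_zero]
  have hpne : p ≠ 0 := by
    rw [hp, hd, ← hAd, Polynomial.coeff_natDegree]
    exact Polynomial.leadingCoeff_ne_zero.mpr hA0
  have hBdeg : B.natDegree ≤ d := by
    calc B.natDegree ≤ A'.natDegree * (Xt - Polynomial.C z).natDegree :=
          Polynomial.natDegree_comp_le
      _ ≤ d * 1 := by
          apply Nat.mul_le_mul hA'deg
          rw [Polynomial.natDegree_X_sub_C]
      _ = d := by omega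
  have hPcoeffd : P.coeff d = 0 := by
    rw [hP, Polynomial.coeff_sub, Polynomial.coeff_C_mul, Polynomial.coeff_C_mul, hcoeffBd,
      ← hp, mul_comm, sub_self]
  have hP0 : P = 0 := by
    by_contra hPne
    have h1 := hmin P hPne hPL
    have h2 : P.natDegree ≤ d := by
      apply le_trans (Polynomial.natDegree_sub_le _ _)
      apply max_le
      · exact le_trans (Polynomial.natDegree_mul_le)
          (by rw [Polynomial.natDegree_C, hAd]; omega)
      · exact le_trans (Polynomial.natDegree_mul_le)
          (by rw [Polynomial.natDegree_C]; omega)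
    have h3 : P.natDegree = d := le_antisymm h2 h1
    exact hPne (Polynomial.leadingCoeff_eq_zero.mp (by rw [Polynomial.leadingCoeff, h3, hPcoeffd]))
  have hEq : sigR p * q = p * (sigR q + sigR p * (-z * D)) := by
    have := congrArg (fun T : Polynomial (Polynomial ℂ) => T.coeff (d - 1)) hP0
    simp only [hP, Polynomial.coeff_sub, Polynomial.coeff_C_mul, Polynomial.coeff_zero] at this
    rw [hcoeffBd1, ← hq] at this
    have := sub_eq_zero.mp this
    exact this
  -- degree bookkeeping
  have hzne : (-z : Polynomial ℂ) ≠ 0 := neg_ne_zero.mpr Polynomial.X_ne_zero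
  have hDne : D ≠ 0 := by
    rw [hD]
    exact Nat.cast_ne_zero.mpr (by omega : d ≠ 0)
  have hzD : (-z * D) ≠ 0 := mul_ne_zero hzne hDne
  have hzDdeg : (-z * D).natDegree = 1 := by
    rw [Polynomial.natDegree_mul hzne hDne, hD, Polynomial.natDegree_natCast,
      Polynomial.natDegree_neg, hz, Polynomial.natDegree_X]
  have hp' : sigR p ≠ 0 := sigR_ne_zero hpne
  set m : ℕ := p.natDegree with hm
  have hW : p * (sigR p * (-z * D)) ≠ 0 := mul_ne_zero hpne (mul_ne_zero hp' hzD)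
  have hWdeg : (p * (sigR p * (-z * D))).natDegree = 3 * m + 1 := by
    rw [Polynomial.natDegree_mul hpne (mul_ne_zero hp' hzD),
      Polynomial.natDegree_mul hp' hzD, natDegree_sigR, hzDdeg, ← hm]
    omega
  by_cases hqz : q = 0
  · rw [hqz, map_zero, mul_zero, zero_add] at hEq
    exact hW hEq.symm
  · have hq' : sigR q ≠ 0 := sigR_ne_zero hqz
    set n : ℕ := q.natDegree with hn
    have hEq2 : sigR p * q - p * sigR q = p * (sigR p * (-z * D)) := by
      linear_combination hEq
    rcases le_or_gt n m with hnm | hnm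
    · have hbound : (sigR p * q - p * sigR q).natDegree ≤ 2 * m + n := by
        apply le_trans (Polynomial.natDegree_sub_le _ _)
        apply max_le
        · exact le_trans (Polynomial.natDegree_mul_le) (by rw [natDegree_sigR, ← hm, ← hn])
        · exact le_trans (Polynomial.natDegree_mul_le)
            (by rw [natDegree_sigR, ← hm, ← hn]; omega)
      rw [hEq2, hWdeg] at hbound
      omega
    · have hEq3 : p * sigR q = sigR p * q - p * (sigR p * (-z * D)) := by
        linear_combination -hEq
      have hLdeg : (p * sigR q).natDegree = m + 2 * n := by
        rw [Polynomial.natDegree_mul hpne hq', natDegree_sigR, ← hm, ← hn]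
      have hbound : (sigR p * q - p * (sigR p * (-z * D))).natDegree
          ≤ max (2 * m + n) (3 * m + 1) := by
        apply le_trans (Polynomial.natDegree_sub_le _ _)
        apply max_le_max
        · exact le_trans (Polynomial.natDegree_mul_le) (by rw [natDegree_sigR, ← hm, ← hn])
        · rw [hWdeg]
      rw [← hEq3, hLdeg] at hbound
      rcases max_cases (2 * m + n) (3 * m + 1) with ⟨h, _⟩ | ⟨h, _⟩ <;> rw [h] at hbound <;> omega
end

section
/- Let K be a field of characteristic 0 endowed with a nonarchimedean absolute value |·|, R a subring of K[[z]], and ρ : ℕ → ℝ_{>0} monotone increasing with C_n = O(ρ(n)) for every C ∈ R. Suppose X ∈ K[[z]] satisfies |X_0| ≥ 1 and, for every fixed λ, m ∈ ℕ, as n → ∞: (i) ρ(n)·|X_{⌊n/2⌋}|^m = o(|X_{n-λ}|), and (ii) ρ(n)·|X_{n-λ-1}|·|X_{⌊(n-1)/2⌋}|^m = o(|X_{n-λ}|). Then X is transcendental over R. -/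
open Asymptotics Filter

private lemma FGS.vsum {K : Type*} [Field K] (v : AbsoluteValue K ℝ)
    (hna : ∀ a b : K, v (a + b) ≤ max (v a) (v b)) {ι : Type*} (s : Finset ι)
    (f : ι → K) {b : ℝ} (hb : 0 ≤ b) (h : ∀ i ∈ s, v (f i) ≤ b) :
    v (∑ i ∈ s, f i) ≤ b := by
  classical
  induction s using Finset.induction_on with
  | empty => simpa using hb
  | insert _ _ hx ih =>
    rw [Finset.sum_insert hx]
    exact le_trans (hna _ _) (max_le (h _ (Finset.mem_insert_self _ _))
      (ih fun i hi => h i (Finset.mem_insert_of_mem hi)))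

private lemma FGS.global_bound (ρ : ℕ → ℝ) (hρpos : ∀ n, 0 < ρ n) (f : ℕ → ℝ)
    (hf : ∀ n, 0 ≤ f n) (h : f =O[atTop] ρ) : ∃ c > 0, ∀ n, f n ≤ c * ρ n := by
  obtain ⟨c0, hc0⟩ := h.isBigOWith
  rw [isBigOWith_iff] at hc0
  obtain ⟨N, hN⟩ := eventually_atTop.mp hc0
  refine ⟨1 + |c0| + ∑ i ∈ Finset.range N, f i / ρ i, ?_, ?_⟩
  · have h3 : 0 ≤ ∑ i ∈ Finset.range N, f i / ρ i :=
      Finset.sum_nonneg fun i _ => div_nonneg (hf i) (hρpos i).le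
    positivity
  intro n
  rcases le_or_gt N n with hn | hn
  · have := hN n hn
    rw [Real.norm_eq_abs, Real.norm_eq_abs, abs_of_nonneg (hf n),
      abs_of_nonneg (hρpos n).le] at this
    have h2 : c0 * ρ n ≤ |c0| * ρ n := mul_le_mul_of_nonneg_right (le_abs_self _) (hρpos n).le
    have h3 : 0 ≤ ∑ i ∈ Finset.range N, f i / ρ i :=
      Finset.sum_nonneg fun i _ => div_nonneg (hf i) (hρpos i).le
    nlinarith [hρpos n]
  · have h1 : f n / ρ n ≤ ∑ i ∈ Finset.range N, f i / ρ i :=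
      Finset.single_le_sum (f := fun i => f i / ρ i)
        (fun i _ => div_nonneg (hf i) (hρpos i).le) (Finset.mem_range.mpr hn)
    have h2 : f n = (f n / ρ n) * ρ n := by
      rw [div_mul_cancel₀]; exact (hρpos n).ne'
    nlinarith [hρpos n, abs_nonneg c0]

private lemma FGS.pow_bound {K : Type*} [Field K] (v : AbsoluteValue K ℝ)
    (hna : ∀ a b : K, v (a + b) ≤ max (v a) (v b)) (G : PowerSeries K) (M : ℝ) (hM : 1 ≤ M)
    (hG : ∀ k, v (PowerSeries.coeff (R := K) k G) ≤ M) :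
    ∀ j r, v (PowerSeries.coeff (R := K) r (G ^ j)) ≤ M ^ j := by
  have hM0 : (0:ℝ) ≤ M := le_trans zero_le_one hM
  intro j
  induction j with
  | zero =>
    intro r
    rw [pow_zero, pow_zero, PowerSeries.coeff_one]
    split
    · simp
    · simp
  | succ j ih =>
    intro r
    rw [pow_succ, PowerSeries.coeff_mul]
    apply FGS.vsum v hna _ _ (by positivity)
    intro p _
    rw [v.map_mul, pow_succ]
    exact mul_le_mul (ih p.1) (hG p.2) (v.nonneg _) (pow_nonneg hM0 j)

private lemma FGS.eval_bound {K : Type*} [Field K] (v : AbsoluteValue K ℝ)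
    (hna : ∀ a b : K, v (a + b) ≤ max (v a) (v b)) (R : Subring (PowerSeries K))
    (ρ : ℕ → ℝ) (hρpos : ∀ n, 0 < ρ n) (hρmono : Monotone ρ)
    (hR : ∀ C ∈ R, (fun n => v (PowerSeries.coeff (R := K) n C)) =O[atTop] ρ)
    (B : Polynomial (PowerSeries K)) (hB : ∀ j, B.coeff j ∈ R) :
    ∃ c > 0, ∀ (G : PowerSeries K) (M : ℝ), 1 ≤ M → (∀ k, v (PowerSeries.coeff (R := K) k G) ≤ M) →
      ∀ r, v (PowerSeries.coeff (R := K) r (Polynomial.eval G B)) ≤ c * ρ r * M ^ B.natDegree := by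
  classical
  have hRB : ∀ j : ℕ, ∃ c > 0, ∀ i, v (PowerSeries.coeff (R := K) i (B.coeff j)) ≤ c * ρ i :=
    fun j => FGS.global_bound ρ hρpos _ (fun i => v.nonneg _) (hR _ (hB j))
  choose g hg0 hg using hRB
  set D := B.natDegree with hD
  refine ⟨1 + ∑ j ∈ Finset.range (D + 1), g j, by
      have : 0 ≤ ∑ j ∈ Finset.range (D + 1), g j :=
        Finset.sum_nonneg fun j _ => (hg0 j).le
      linarith, ?_⟩
  set c := 1 + ∑ j ∈ Finset.range (D + 1), g j with hc
  have hcg : ∀ j, j ≤ D → g j ≤ c := by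
    intro j hj
    have := Finset.single_le_sum (f := g) (fun i _ => (hg0 i).le)
      (Finset.mem_range.mpr (Nat.lt_succ_of_le hj))
    linarith
  have hc0 : 0 < c := by
    have : 0 ≤ ∑ j ∈ Finset.range (D + 1), g j :=
      Finset.sum_nonneg fun j _ => (hg0 j).le
    linarith
  intro G M hM hG r
  have hM0 : (0:ℝ) ≤ M := le_trans zero_le_one hM
  have hb0 : 0 ≤ c * ρ r * M ^ D :=
    mul_nonneg (mul_nonneg hc0.le (hρpos r).le) (pow_nonneg hM0 D)
  rw [Polynomial.eval_eq_sum_range, map_sum]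
  refine FGS.vsum v hna _ _ hb0 ?_
  intro j hj
  have hjD : j ≤ D := Nat.lt_succ_iff.mp (Finset.mem_range.mp hj)
  rw [PowerSeries.coeff_mul]
  refine FGS.vsum v hna _ _ hb0 ?_
  intro p hp
  have hpr : p.1 + p.2 = r := Finset.HasAntidiagonal.mem_antidiagonal.mp hp
  rw [v.map_mul]
  have h1 : v (PowerSeries.coeff (R := K) p.1 (B.coeff j)) ≤ c * ρ r := by
    refine le_trans (hg j p.1) ?_
    have h2 : ρ p.1 ≤ ρ r := hρmono (by omega)
    have h3 := hcg j hjD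
    nlinarith [hρpos p.1, hg0 j]
  have h2 : v (PowerSeries.coeff (R := K) p.2 (G ^ j)) ≤ M ^ D := by
    refine le_trans (FGS.pow_bound v hna G M hM hG j p.2) ?_
    exact pow_le_pow_right₀ hM hjD
  have h3 : (0:ℝ) ≤ c * ρ r := by nlinarith [hρpos r]
  exact mul_le_mul h1 h2 (v.nonneg _) h3

private lemma FGS.eval_congr {K : Type*} [Field K] (B : Polynomial (PowerSeries K))
    (G H : PowerSeries K) (m r : ℕ)
    (h : ∀ i, i < m → PowerSeries.coeff (R := K) i G = PowerSeries.coeff (R := K) i H) (hr : r < m) :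
    PowerSeries.coeff (R := K) r (Polynomial.eval G B) = PowerSeries.coeff (R := K) r (Polynomial.eval H B) := by
  have hdvd : (PowerSeries.X : PowerSeries K) ^ m ∣ G - H :=
    PowerSeries.X_pow_dvd_iff.mpr (fun i hi => by rw [map_sub, h i hi, sub_self])
  have h2 : (PowerSeries.X : PowerSeries K) ^ m ∣ Polynomial.eval G B - Polynomial.eval H B :=
    dvd_trans hdvd (Polynomial.sub_dvd_eval_sub G H B)
  have h3 := PowerSeries.X_pow_dvd_iff.mp h2 r hr
  rw [map_sub, sub_eq_zero] at h3
  exact h3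

private lemma FGS.trunc_coeff {K : Type*} [Field K] (X : PowerSeries K) (t k : ℕ) :
    PowerSeries.coeff (R := K) k ((PowerSeries.trunc (t+1) X : Polynomial K) : PowerSeries K)
      = if k ≤ t then PowerSeries.coeff (R := K) k X else 0 := by
  rw [Polynomial.coeff_coe, PowerSeries.coeff_trunc]
  simp [Nat.lt_succ_iff]

private lemma FGS.core {K : Type*} [Field K] [CharZero K]
    (v : AbsoluteValue K ℝ) (hna : ∀ a b : K, v (a + b) ≤ max (v a) (v b))
    (R : Subring (PowerSeries K)) (X : PowerSeries K)
    (ρ : ℕ → ℝ) (hρpos : ∀ n, 0 < ρ n) (hρmono : Monotone ρ)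
    (hR : ∀ C ∈ R, (fun n => v (PowerSeries.coeff (R := K) n C)) =O[atTop] ρ)
    (hcond1 : ∀ lam m : ℕ,
      (fun n => ρ n * v (PowerSeries.coeff (R := K) (n / 2) X) ^ m)
        =o[atTop] fun n => v (PowerSeries.coeff (R := K) (n - lam) X))
    (hcond2 : ∀ lam m : ℕ,
      (fun n => ρ n * v (PowerSeries.coeff (R := K) (n - lam - 1) X) *
          v (PowerSeries.coeff (R := K) ((n - 1) / 2) X) ^ m)
        =o[atTop] fun n => v (PowerSeries.coeff (R := K) (n - lam) X))
    (A : Polynomial (PowerSeries K)) (hAR : ∀ j, A.coeff j ∈ R)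
    (hA : Polynomial.eval X A = 0)
    (hY : Polynomial.eval X (Polynomial.derivative A) ≠ 0) : False := by
  classical
  set Y := Polynomial.eval X (Polynomial.derivative A) with hYdef
  have hex : ∃ μ, PowerSeries.coeff (R := K) μ Y ≠ 0 := by
    by_contra h
    push_neg at h
    exact hY (PowerSeries.ext h)
  set μ := Nat.find hex with hμdef
  have hμ : PowerSeries.coeff (R := K) μ Y ≠ 0 := Nat.find_spec hex
  have hμmin : ∀ r, r < μ → PowerSeries.coeff (R := K) r Y = 0 := fun r hr =>
    not_not.mp (Nat.find_min hex hr)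
  have hA'R : ∀ j, (Polynomial.derivative A).coeff j ∈ R := by
    intro j
    rw [Polynomial.coeff_derivative]
    exact R.mul_mem (hAR _) (R.add_mem (natCast_mem R _) R.one_mem)
  obtain ⟨cA, hcA0, hcA⟩ := FGS.eval_bound v hna R ρ hρpos hρmono hR A hAR
  obtain ⟨cA', hcA'0, hcA'⟩ := FGS.eval_bound v hna R ρ hρpos hρmono hR
    (Polynomial.derivative A) hA'R
  set D := A.natDegree with hD
  set D' := (Polynomial.derivative A).natDegree with hD'
  -- the running max function
  set N : ℕ → ℝ := fun r => (Finset.range (r+1)).sup' Finset.nonempty_range_add_one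
    (fun k => max 1 (v (PowerSeries.coeff (R := K) k X))) with hNdef
  have hN1 : ∀ r, 1 ≤ N r := fun r =>
    le_trans (le_max_left 1 (v (PowerSeries.coeff (R := K) r X)))
      (Finset.le_sup' (fun k => max 1 (v (PowerSeries.coeff (R := K) k X)))
        (Finset.self_mem_range_succ r))
  have hNX : ∀ k r, k ≤ r → v (PowerSeries.coeff (R := K) k X) ≤ N r := fun k r h =>
    le_trans (le_max_right 1 (v (PowerSeries.coeff (R := K) k X)))
      (Finset.le_sup' (fun k => max 1 (v (PowerSeries.coeff (R := K) k X)))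
        (Finset.mem_range_succ_iff.mpr h))
  have hNmono : ∀ a b, a ≤ b → N a ≤ N b := by
    intro a b hab
    apply Finset.sup'_le
    intro k hk
    exact Finset.le_sup' (fun k => max 1 (v (PowerSeries.coeff (R := K) k X)))
      (Finset.mem_range_succ_iff.mpr
        (le_trans (Finset.mem_range_succ_iff.mp hk) hab))
  -- truncations
  set S : ℕ → PowerSeries K :=
    fun t => ((PowerSeries.trunc (t+1) X : Polynomial K) : PowerSeries K) with hSdef
  have hScoeff : ∀ t k, PowerSeries.coeff (R := K) k (S t)
      = if k ≤ t then PowerSeries.coeff (R := K) k X else 0 := fun t k => FGS.trunc_coeff X t k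
  have hSbound : ∀ t k, v (PowerSeries.coeff (R := K) k (S t)) ≤ N t := by
    intro t k
    rw [hScoeff]
    split
    · exact hNX k t ‹_›
    · rw [v.map_zero]; linarith [hN1 t]
  have hSagree : ∀ t i, i < t + 1 → PowerSeries.coeff (R := K) i (S t) = PowerSeries.coeff (R := K) i X := by
    intro t i hi
    rw [hScoeff, if_pos (Nat.lt_succ_iff.mp hi)]
  -- bound on coefficients of Y
  have hYb : ∀ r, v (PowerSeries.coeff (R := K) r Y) ≤ cA' * ρ r * (N r) ^ D' := by
    intro r
    have hcong := FGS.eval_congr (Polynomial.derivative A) (S r) X (r+1) r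
      (hSagree r) (Nat.lt_succ_self r)
    rw [hYdef, ← hcong]
    exact hcA' (S r) (N r) (hN1 r) (hSbound r) r
  -- eventual monotonicity
  have hstep := (hcond2 0 0).def (hρpos 0)
  obtain ⟨n₀, hn₀⟩ := eventually_atTop.mp hstep
  have hmono1 : ∀ n, n₀ ≤ n → v (PowerSeries.coeff (R := K) (n-1) X) ≤ v (PowerSeries.coeff (R := K) n X) := by
    intro n hn
    have h := hn₀ n hn
    simp only [pow_zero, mul_one, Nat.sub_zero, Real.norm_eq_abs] at h
    rw [abs_of_nonneg (mul_nonneg (hρpos n).le (v.nonneg _)), abs_of_nonneg (v.nonneg _)] at h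
    have hρn : ρ 0 ≤ ρ n := hρmono (Nat.zero_le n)
    nlinarith [v.nonneg (PowerSeries.coeff (R := K) (n-1) X), hρpos n,
      v.nonneg (PowerSeries.coeff (R := K) n X),
      mul_le_mul_of_nonneg_right hρn (v.nonneg (PowerSeries.coeff (R := K) n X))]
  have hmono : ∀ a b, n₀ ≤ a → a ≤ b →
      v (PowerSeries.coeff (R := K) a X) ≤ v (PowerSeries.coeff (R := K) b X) := by
    intro a b ha hab
    induction b with
    | zero => rw [Nat.le_zero.mp hab]
    | succ b ih =>
      by_cases h : a = b + 1
      · rw [h]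
      · refine le_trans (ih (by omega)) ?_
        have := hmono1 (b+1) (by omega)
        simpa using this
  -- divergence
  have htend : ∀ Bd : ℝ, ∀ᶠ n in atTop, Bd ≤ v (PowerSeries.coeff (R := K) n X) := by
    intro Bd
    rcases le_or_gt Bd 0 with hB | hB
    · exact Eventually.of_forall fun n => le_trans hB (v.nonneg _)
    · have h := (hcond1 0 0).def (div_pos (hρpos 0) hB)
      filter_upwards [h] with n hn
      simp only [pow_zero, mul_one, Nat.sub_zero, Real.norm_eq_abs] at hn
      rw [abs_of_nonneg (hρpos n).le, abs_of_nonneg (v.nonneg _)] at hn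
      have hρn : ρ 0 ≤ ρ n := hρmono (Nat.zero_le n)
      have h0 : 0 < ρ 0 := hρpos 0
      rw [div_mul_eq_mul_div, le_div_iff₀ hB] at hn
      nlinarith [v.nonneg (PowerSeries.coeff (R := K) n X), hρpos n,
        mul_le_mul_of_nonneg_right hρn (v.nonneg (PowerSeries.coeff (R := K) n X))]
  obtain ⟨n₁', hn₁'⟩ := eventually_atTop.mp (htend (max 1 (N n₀)))
  set n₁ := max n₁' n₀ with hn₁def
  have hNle : ∀ m, n₁ ≤ m → N m ≤ v (PowerSeries.coeff (R := K) m X) := by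
    intro m hm
    have hvm : max 1 (N n₀) ≤ v (PowerSeries.coeff (R := K) m X) := hn₁' m (le_trans (le_max_left _ _) hm)
    apply Finset.sup'_le
    intro k hk
    have hk' : k ≤ m := Finset.mem_range_succ_iff.mp hk
    rcases le_or_gt k n₀ with h | h
    · refine le_trans (max_le_max le_rfl (hNX k n₀ h)) ?_
      exact hvm
    · apply max_le
      · exact le_trans (le_max_left 1 (N n₀)) hvm
      · exact hmono k m (by omega) hk'
  -- pick a large n
  have hvY : 0 < v (PowerSeries.coeff (R := K) μ Y) := v.pos hμ
  set cM := max cA cA' with hcM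
  have hcM0 : 0 < cM := lt_of_lt_of_le hcA0 (le_max_left _ _)
  set ε := v (PowerSeries.coeff (R := K) μ Y) / (2 * cM) with hεdef
  have hε0 : 0 < ε := div_pos hvY (by linarith)
  have H1e := (hcond1 μ D).def hε0
  have H2e := (hcond2 μ D').def hε0
  have H3e := (hcond1 μ 0).def one_pos
  obtain ⟨n, hnge, H1, H2, H3⟩ :=
    ((eventually_ge_atTop (2*(n₁+n₀+μ+2)+2)).and (H1e.and (H2e.and H3e))).exists
  -- normalize the asymptotic bounds
  simp only [Real.norm_eq_abs] at H1 H2 H3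
  rw [abs_of_nonneg (mul_nonneg (hρpos n).le (pow_nonneg (v.nonneg _) _)),
    abs_of_nonneg (v.nonneg _)] at H1
  rw [abs_of_nonneg (mul_nonneg (mul_nonneg (hρpos n).le (v.nonneg _))
    (pow_nonneg (v.nonneg _) _)), abs_of_nonneg (v.nonneg _)] at H2
  rw [abs_of_nonneg (mul_nonneg (hρpos n).le (pow_nonneg (v.nonneg _) _)),
    abs_of_nonneg (v.nonneg _)] at H3
  rw [pow_zero, mul_one] at H3
  have hXpos : 0 < v (PowerSeries.coeff (R := K) (n - μ) X) := lt_of_lt_of_le (hρpos n) (by linarith)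
  -- the binomial expansion identity
  obtain ⟨kk, hbe⟩ := Polynomial.binomExpansion A (S (n/2)) (X - S (n/2))
  have hSX : S (n/2) + (X - S (n/2)) = X := by ring
  rw [hSX, hA] at hbe
  set T := X - S (n/2) with hTdef
  have hTcoeff : ∀ k, PowerSeries.coeff (R := K) k T
      = if n/2 < k then PowerSeries.coeff (R := K) k X else 0 := by
    intro k
    rcases le_or_gt k (n/2) with h | h
    · rw [hTdef, map_sub, hScoeff, if_pos h, sub_self, if_neg (by omega)]
    · rw [hTdef, map_sub, hScoeff, if_neg (by omega), sub_zero, if_pos h]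
  have hT2 : ∀ m, m ≤ n → PowerSeries.coeff (R := K) m (T^2) = 0 := by
    intro m hm
    rw [pow_two, PowerSeries.coeff_mul]
    apply Finset.sum_eq_zero
    intro q hq
    have hq' := Finset.HasAntidiagonal.mem_antidiagonal.mp hq
    rcases le_or_gt q.1 (n/2) with h | h
    · rw [hTcoeff q.1, if_neg (by omega), zero_mul]
    · rw [hTcoeff q.2, if_neg (by omega), mul_zero]
  have hkk : PowerSeries.coeff (R := K) n (kk * T^2) = 0 := by
    rw [PowerSeries.coeff_mul]
    apply Finset.sum_eq_zero
    intro q hq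
    have hq' := Finset.HasAntidiagonal.mem_antidiagonal.mp hq
    rw [hT2 q.2 (by omega), mul_zero]
  -- split off the dominant term
  have hmem : (μ, n - μ) ∈ Finset.HasAntidiagonal.antidiagonal n := Finset.HasAntidiagonal.mem_antidiagonal.mpr (by omega)
  set SS := ∑ p ∈ (Finset.HasAntidiagonal.antidiagonal n).erase (μ, n - μ),
    (PowerSeries.coeff (R := K) p.1 (Polynomial.eval (S (n/2)) (Polynomial.derivative A))) *
      PowerSeries.coeff (R := K) p.2 T with hSS
  have hmid : PowerSeries.coeff (R := K) n (Polynomial.eval (S (n/2)) (Polynomial.derivative A) * T)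
      = (PowerSeries.coeff (R := K) μ Y) * (PowerSeries.coeff (R := K) (n-μ) X) + SS := by
    rw [PowerSeries.coeff_mul, ← Finset.add_sum_erase _ _ hmem, hSS]
    congr 1
    rw [hTcoeff, if_pos (by omega),
      FGS.eval_congr (Polynomial.derivative A) (S (n/2)) X (n/2+1) μ (hSagree (n/2)) (by omega)]
  -- the key identity
  have hco := congrArg (PowerSeries.coeff (R := K) n) hbe
  rw [map_zero, map_add, map_add, hmid, hkk, add_zero] at hco
  have hkey : (PowerSeries.coeff (R := K) μ Y) * (PowerSeries.coeff (R := K) (n-μ) X)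
      = -(PowerSeries.coeff (R := K) n (Polynomial.eval (S (n/2)) A) + SS) := by
    linear_combination -hco
  -- bounds
  set b1 := cA * (ρ n * v (PowerSeries.coeff (R := K) (n/2) X) ^ D) with hb1
  set b2 := cA' * (ρ n * v (PowerSeries.coeff (R := K) (n-μ-1) X) *
    v (PowerSeries.coeff (R := K) ((n-1)/2) X) ^ D') with hb2
  have hb1nn : 0 ≤ b1 :=
    mul_nonneg hcA0.le (mul_nonneg (hρpos n).le (pow_nonneg (v.nonneg _) _))
  have hb2nn : 0 ≤ b2 := mul_nonneg hcA'0.le (mul_nonneg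
    (mul_nonneg (hρpos n).le (v.nonneg _)) (pow_nonneg (v.nonneg _) _))
  have hE1 : v (PowerSeries.coeff (R := K) n (Polynomial.eval (S (n/2)) A)) ≤ b1 := by
    refine le_trans (hcA (S (n/2)) (N (n/2)) (hN1 _) (hSbound _) n) ?_
    have hNv : N (n/2) ≤ v (PowerSeries.coeff (R := K) (n/2) X) := hNle _ (by omega)
    have hp : N (n/2) ^ D ≤ v (PowerSeries.coeff (R := K) (n/2) X) ^ D :=
      pow_le_pow_left₀ (by linarith [hN1 (n/2)]) hNv D
    rw [hb1, ← mul_assoc]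
    exact mul_le_mul_of_nonneg_left hp (mul_nonneg hcA0.le (hρpos n).le)
  have hSSb : v SS ≤ b2 := by
    rw [hSS]
    refine FGS.vsum v hna _ _ hb2nn ?_
    intro p hp
    have hpne : p ≠ (μ, n - μ) := Finset.ne_of_mem_erase hp
    have hpd : p.1 + p.2 = n := Finset.HasAntidiagonal.mem_antidiagonal.mp (Finset.mem_of_mem_erase hp)
    rcases le_or_gt p.2 (n/2) with h | h
    · rw [hTcoeff, if_neg (by omega), mul_zero, v.map_zero]
      exact hb2nn
    · rw [FGS.eval_congr (Polynomial.derivative A) (S (n/2)) X (n/2+1) p.1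
        (hSagree (n/2)) (by omega), ← hYdef]
      rcases lt_or_ge p.1 μ with h1 | h1
      · rw [hμmin p.1 h1, zero_mul, v.map_zero]
        exact hb2nn
      · have h2 : μ + 1 ≤ p.1 := by
          rcases Nat.eq_or_lt_of_le h1 with h3 | h3
          · exact absurd (Prod.ext h3.symm (by omega)) hpne
          · omega
        have h3 : p.1 ≤ (n-1)/2 := by omega
        rw [hTcoeff, if_pos h, v.map_mul]
        have hY1 : v (PowerSeries.coeff (R := K) p.1 Y)
            ≤ cA' * (ρ n * v (PowerSeries.coeff (R := K) ((n-1)/2) X) ^ D') := by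
          refine le_trans (hYb p.1) ?_
          have e1 : ρ p.1 ≤ ρ n := hρmono (by omega)
          have e2 : N p.1 ≤ v (PowerSeries.coeff (R := K) ((n-1)/2) X) :=
            le_trans (hNmono _ _ h3) (hNle _ (by omega))
          have e3 : N p.1 ^ D' ≤ v (PowerSeries.coeff (R := K) ((n-1)/2) X) ^ D' :=
            pow_le_pow_left₀ (by linarith [hN1 p.1]) e2 D'
          have e4 : ρ p.1 * N p.1 ^ D' ≤ ρ n * v (PowerSeries.coeff (R := K) ((n-1)/2) X) ^ D' :=
            mul_le_mul e1 e3 (pow_nonneg (by linarith [hN1 p.1]) _) (hρpos n).le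
          rw [mul_assoc]
          exact mul_le_mul_of_nonneg_left e4 hcA'0.le
        have hX1 : v (PowerSeries.coeff (R := K) p.2 X) ≤ v (PowerSeries.coeff (R := K) (n-μ-1) X) :=
          hmono p.2 (n-μ-1) (by omega) (by omega)
        calc v (PowerSeries.coeff (R := K) p.1 Y) * v (PowerSeries.coeff (R := K) p.2 X)
            ≤ (cA' * (ρ n * v (PowerSeries.coeff (R := K) ((n-1)/2) X) ^ D')) *
              v (PowerSeries.coeff (R := K) (n-μ-1) X) :=
              mul_le_mul hY1 hX1 (v.nonneg _) (mul_nonneg hcA'0.le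
                (mul_nonneg (hρpos n).le (pow_nonneg (v.nonneg _) _)))
          _ = b2 := by rw [hb2]; ring
  -- conclude
  have hfin : v (PowerSeries.coeff (R := K) μ Y) * v (PowerSeries.coeff (R := K) (n-μ) X) ≤ max b1 b2 := by
    rw [← v.map_mul, hkey, v.map_neg]
    exact le_trans (hna _ _) (max_le_max hE1 hSSb)
  have hcε : cM * ε = v (PowerSeries.coeff (R := K) μ Y) / 2 := by
    rw [hεdef]
    field_simp
  have hball : max b1 b2 ≤ (v (PowerSeries.coeff (R := K) μ Y) / 2) * v (PowerSeries.coeff (R := K) (n-μ) X) := by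
    apply max_le
    · rw [hb1, ← hcε]
      calc cA * (ρ n * v (PowerSeries.coeff (R := K) (n/2) X) ^ D)
          ≤ cA * (ε * v (PowerSeries.coeff (R := K) (n-μ) X)) :=
            mul_le_mul_of_nonneg_left H1 hcA0.le
        _ ≤ cM * (ε * v (PowerSeries.coeff (R := K) (n-μ) X)) :=
            mul_le_mul_of_nonneg_right (le_max_left _ _)
              (mul_nonneg hε0.le (v.nonneg _))
        _ = cM * ε * v (PowerSeries.coeff (R := K) (n-μ) X) := by ring
    · rw [hb2, ← hcε]
      calc cA' * (ρ n * v (PowerSeries.coeff (R := K) (n-μ-1) X) *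
            v (PowerSeries.coeff (R := K) ((n-1)/2) X) ^ D')
          ≤ cA' * (ε * v (PowerSeries.coeff (R := K) (n-μ) X)) :=
            mul_le_mul_of_nonneg_left H2 hcA'0.le
        _ ≤ cM * (ε * v (PowerSeries.coeff (R := K) (n-μ) X)) :=
            mul_le_mul_of_nonneg_right (le_max_right _ _)
              (mul_nonneg hε0.le (v.nonneg _))
        _ = cM * ε * v (PowerSeries.coeff (R := K) (n-μ) X) := by ring
  nlinarith [hfin, hball, hXpos, hvY]

theorem fast_growing_series_stmt19 {K : Type*} [Field K] [CharZero K]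
    (v : AbsoluteValue K ℝ) (hna : ∀ a b : K, v (a + b) ≤ max (v a) (v b))
    (R : Subring (PowerSeries K)) (X : PowerSeries K)
    (ρ : ℕ → ℝ) (hρpos : ∀ n, 0 < ρ n) (hρmono : Monotone ρ)
    (hR : ∀ C ∈ R, (fun n => v (PowerSeries.coeff (R := K) n C)) =O[atTop] ρ)
    (hX0 : 1 ≤ v (PowerSeries.coeff (R := K) 0 X))
    (hcond1 : ∀ lam m : ℕ,
      (fun n => ρ n * v (PowerSeries.coeff (R := K) (n / 2) X) ^ m)
        =o[atTop] fun n => v (PowerSeries.coeff (R := K) (n - lam) X))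
    (hcond2 : ∀ lam m : ℕ,
      (fun n => ρ n * v (PowerSeries.coeff (R := K) (n - lam - 1) X) *
          v (PowerSeries.coeff (R := K) ((n - 1) / 2) X) ^ m)
        =o[atTop] fun n => v (PowerSeries.coeff (R := K) (n - lam) X)) :
    ∀ A : Polynomial (PowerSeries K), (∀ j, A.coeff j ∈ R) →
      Polynomial.eval X A = 0 → A = 0 := by
  classical
  intro A hAR hA
  by_contra hA0
  have hS : ∃ d, ∃ B : Polynomial (PowerSeries K), B ≠ 0 ∧ B.natDegree ≤ d ∧
      (∀ j, B.coeff j ∈ R) ∧ Polynomial.eval X B = 0 :=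
    ⟨A.natDegree, A, hA0, le_rfl, hAR, hA⟩
  set d := Nat.find hS with hddef
  obtain ⟨B, hB0, hBd, hBR, hBX⟩ := Nat.find_spec hS
  -- B has natDegree exactly d and d ≥ 1
  have hd1 : 1 ≤ d := by
    by_contra h
    have hd0 : d = 0 := by omega
    have hdeg : B.natDegree = 0 := by omega
    obtain ⟨c, hc⟩ := Polynomial.natDegree_eq_zero.mp hdeg
    rw [← hc, Polynomial.eval_C] at hBX
    exact hB0 (by rw [← hc, hBX, map_zero])
  have hBdeq : B.natDegree = d := by
    rcases Nat.lt_or_ge B.natDegree d with h | h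
    · exact absurd ⟨B, hB0, by omega, hBR, hBX⟩ (Nat.find_min hS (show B.natDegree < d from h))
    · omega
  -- the derivative is nonzero
  have hlc : B.coeff d ≠ 0 := by
    rw [← hBdeq]
    exact Polynomial.leadingCoeff_ne_zero.mpr hB0
  have hcast : ((d : PowerSeries K)) ≠ 0 := by
    intro h
    have := congrArg (PowerSeries.constantCoeff (R := K)) h
    rw [map_natCast, map_zero] at this
    exact (Nat.cast_ne_zero.mpr (by omega : d ≠ 0)) this
  have hB' : Polynomial.derivative B ≠ 0 := by
    intro h
    have hco : (Polynomial.derivative B).coeff (d - 1) = 0 := by rw [h]; simp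
    rw [Polynomial.coeff_derivative] at hco
    have hdd : d - 1 + 1 = d := by omega
    rw [hdd] at hco
    rcases mul_eq_zero.mp hco with h1 | h1
    · exact hlc h1
    · apply hcast
      rw [show ((d : PowerSeries K)) = ((d - 1 : ℕ) : PowerSeries K) + 1 by
        rw [← hdd]; push_cast; ring]
      exact h1
  have hB'R : ∀ j, (Polynomial.derivative B).coeff j ∈ R := by
    intro j
    rw [Polynomial.coeff_derivative]
    exact R.mul_mem (hBR _) (R.add_mem (natCast_mem R _) R.one_mem)
  have hB'X : Polynomial.eval X (Polynomial.derivative B) ≠ 0 := by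
    intro h
    have hdlt : (Polynomial.derivative B).natDegree < d :=
      lt_of_le_of_lt (Polynomial.natDegree_derivative_le B) (by omega)
    exact absurd ⟨Polynomial.derivative B, hB', by omega, hB'R, h⟩
      (Nat.find_min hS hdlt)
  exact FGS.core v hna R X ρ hρpos hρmono hR hcond1 hcond2 B hBR hBX hB'X
end
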